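/- Let n ≥ 1 and let α = (a_1,…,a_n) be rational numbers with each a_i ∈ (0,1), and let λ ∈ ℚ. Let M be the least common denominator of a_1,…,a_n and λ, and let p be a prime not dividing M. Let α' = (a_1',…,a_n') be the image of α under the Dwork dash operation. Then for every integer m ≥ 1 and all integers t ≥ s ≥ 1 one has F(α;λ)_{m·p^s−1} · F(α';λ^p)_{m·p^{t−1}−1} ≡ F(α';λ^p)_{m·p^{s−1}−1} · F(α;λ)_{m·p^t−1} (mod p^s). -/

import Mathlib

open Finset

/-- The rising factorial (Pochhammer symbol) `(a)_k = a (a+1) ⋯ (a+k-1)`. -/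
def risingFact (a : ℚ) (k : ℕ) : ℚ := ∏ i ∈ Finset.range k, (a + i)

/-- The first `p`-adic digit `[r]_0` of a rational `r` (with denominator prime to `p`):
the unique integer in `[0, p-1]` congruent to `r` modulo `p`. -/
def firstDigit (p : ℕ) [Fact p.Prime] (r : ℚ) : ℕ := ((r : ZMod p)).val

/-- The Dwork dash operation `r' = (r + [-r]_0)/p`. -/
def dworkDash (p : ℕ) [Fact p.Prime] (r : ℚ) : ℚ := (r + (firstDigit p (-r) : ℚ)) / p

/-- Truncated hypergeometric series -/
def truncHG {n : ℕ} (a : Fin n → ℚ) (lam : ℚ) (N : ℕ) : ℚ :=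
  ∑ k ∈ Finset.range (N + 1),
    (∏ i, risingFact (a i) k) / ((Nat.factorial k : ℚ)) ^ n * lam ^ k

namespace DworkProof

variable {p : ℕ} [hp : Fact p.Prime]


/-- ultrametric sum bound -/
lemma norm_sum_le {ι : Type*} (s : Finset ι) (f : ι → ℚ_[p]) (C : ℝ) (hC : 0 ≤ C)
    (h : ∀ i ∈ s, ‖f i‖ ≤ C) : ‖∑ i ∈ s, f i‖ ≤ C := by
  classical
  induction s using Finset.induction_on with
  | empty => simpa using hC
  | @insert a s' hx ih =>
    rw [Finset.sum_insert hx]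
    refine le_trans (Padic.nonarchimedean _ _) (max_le (h a (Finset.mem_insert_self a s'))
      (ih fun i hi => h i (Finset.mem_insert_of_mem hi)))

lemma norm_prod_le_one {ι : Type*} (s : Finset ι) (f : ι → ℚ_[p])
    (hf : ∀ i ∈ s, ‖f i‖ ≤ 1) : ‖∏ i ∈ s, f i‖ ≤ 1 := by
  rw [norm_prod]
  exact Finset.prod_le_one (fun i _ => norm_nonneg _) hf

lemma norm_sub_le_max (x y : ℚ_[p]) : ‖x - y‖ ≤ max ‖x‖ ‖y‖ := by
  simpa [sub_eq_add_neg] using Padic.nonarchimedean x (-y)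

/-- ultrametric: difference of products, factorwise close -/
lemma norm_prod_sub_prod {ι : Type*} (s : Finset ι) (f g : ι → ℚ_[p]) (ε : ℝ) (hε : 0 ≤ ε)
    (hf : ∀ i ∈ s, ‖f i‖ ≤ 1) (hg : ∀ i ∈ s, ‖g i‖ ≤ 1)
    (h : ∀ i ∈ s, ‖f i - g i‖ ≤ ε) :
    ‖∏ i ∈ s, f i - ∏ i ∈ s, g i‖ ≤ ε := by
  classical
  induction s using Finset.induction_on with
  | empty => simpa using hε
  | @insert a s' hx ih =>
    rw [Finset.prod_insert hx, Finset.prod_insert hx]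
    have key : f a * ∏ i ∈ s', f i - g a * ∏ i ∈ s', g i
        = (f a - g a) * ∏ i ∈ s', f i + g a * (∏ i ∈ s', f i - ∏ i ∈ s', g i) := by ring
    rw [key]
    have hfp : ‖∏ i ∈ s', f i‖ ≤ 1 :=
      norm_prod_le_one _ _ (fun i hi => hf i (mem_insert_of_mem hi))
    have h1 : ‖(f a - g a) * ∏ i ∈ s', f i‖ ≤ ε := by
      rw [norm_mul]
      calc ‖f a - g a‖ * ‖∏ i ∈ s', f i‖ ≤ ε * 1 :=
            mul_le_mul (h a (mem_insert_self _ _)) hfp (norm_nonneg _) hε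
        _ = ε := mul_one ε
    have h2 : ‖g a * (∏ i ∈ s', f i - ∏ i ∈ s', g i)‖ ≤ ε := by
      rw [norm_mul]
      calc ‖g a‖ * ‖∏ i ∈ s', f i - ∏ i ∈ s', g i‖ ≤ 1 * ε :=
            mul_le_mul (hg a (mem_insert_self _ _))
              (ih (fun i hi => hf i (mem_insert_of_mem hi)) (fun i hi => hg i (mem_insert_of_mem hi))
                (fun i hi => h i (mem_insert_of_mem hi))) (norm_nonneg _) zero_le_one
        _ = ε := one_mul ε
    exact le_trans (Padic.nonarchimedean _ _) (max_le h1 h2)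


/-- factor for the "unit part" products: `1` on the residue class `u₀` mod `p`. -/
noncomputable def facK (q : ℕ) [Fact q.Prime] (x : ℚ_[q]) (u₀ : ℕ) (i : ℕ) : ℚ_[q] :=
  if i % q = u₀ then 1 else x + (i : ℚ_[q])

/-- block product of length `q^s` of unit-part factors with offset class `0`, shifted by `y`. -/
noncomputable def Vs (q : ℕ) [Fact q.Prime] (s : ℕ) (y : ℚ_[q]) : ℚ_[q] :=
  ∏ i ∈ Finset.range (q ^ s), facK q y 0 i

lemma prod_range_mul_blocks (f : ℕ → ℚ_[p]) (N B : ℕ) :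
    ∏ i ∈ range (N * B), f i = ∏ q ∈ range N, ∏ r ∈ range B, f (B * q + r) := by
  induction N with
  | zero => simp
  | succ n ih =>
    rw [Nat.succ_mul, Finset.prod_range_add, ih, Finset.prod_range_succ]
    congr 1
    exact Finset.prod_congr rfl fun r _ => by ring_nf

lemma sum_range_mul_blocks (f : ℕ → ℚ_[p]) (N B : ℕ) :
    ∑ i ∈ range (N * B), f i = ∑ q ∈ range N, ∑ r ∈ range B, f (B * q + r) := by
  induction N with
  | zero => simp
  | succ n ih =>
    rw [Nat.succ_mul, Finset.sum_range_add, ih, Finset.sum_range_succ]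
    congr 1
    exact Finset.sum_congr rfl fun r _ => by ring_nf

lemma facK_norm_le (x : ℚ_[p]) (u₀ i : ℕ) (hx : ‖x‖ ≤ 1) : ‖facK p x u₀ i‖ ≤ 1 := by
  unfold facK
  split
  · simp
  · refine le_trans (Padic.nonarchimedean _ _) (max_le hx ?_)
    exact_mod_cast Padic.norm_int_le_one (i : ℤ)

lemma Fdiff1 {ι : Type*} (s : Finset ι) (c : ι → ℚ_[p]) (y y' : ℚ_[p])
    (hc : ∀ i ∈ s, ‖c i‖ ≤ 1) (hy : ‖y‖ ≤ 1) (hy' : ‖y'‖ ≤ 1) :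
    ‖∏ i ∈ s, (c i + y) - ∏ i ∈ s, (c i + y')‖ ≤ ‖y - y'‖ := by
  refine norm_prod_sub_prod s _ _ _ (norm_nonneg _) ?_ ?_ ?_
  · exact fun i hi => le_trans (Padic.nonarchimedean _ _) (max_le (hc i hi) hy)
  · exact fun i hi => le_trans (Padic.nonarchimedean _ _) (max_le (hc i hi) hy')
  · intro i hi
    simp only [add_sub_add_left_eq_sub]
    exact le_refl _

lemma Fdiff2 {ι : Type*} (s : Finset ι) (c : ι → ℚ_[p]) (y h : ℚ_[p])
    (hc : ∀ i ∈ s, ‖c i‖ ≤ 1) (hy : ‖y‖ ≤ 1) (hh : ‖h‖ ≤ 1) :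
    ‖∏ i ∈ s, (c i + (y + h)) - ∏ i ∈ s, (c i + h) - (∏ i ∈ s, (c i + y) - ∏ i ∈ s, c i)‖
      ≤ ‖y‖ * ‖h‖ := by
  classical
  induction s using Finset.induction_on with
  | empty => simpa using mul_nonneg (norm_nonneg y) (norm_nonneg h)
  | @insert a s' hx ih =>
    have hcs : ∀ i ∈ s', ‖c i‖ ≤ 1 := fun i hi => hc i (mem_insert_of_mem hi)
    have hca : ‖c a‖ ≤ 1 := hc a (mem_insert_self _ _)
    rw [Finset.prod_insert hx, Finset.prod_insert hx, Finset.prod_insert hx, Finset.prod_insert hx]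
    set F1 := ∏ i ∈ s', (c i + (y + h))
    set F2 := ∏ i ∈ s', (c i + h)
    set F3 := ∏ i ∈ s', (c i + y)
    set F4 := ∏ i ∈ s', c i
    have key : (c a + (y + h)) * F1 - (c a + h) * F2 - ((c a + y) * F3 - c a * F4)
        = c a * (F1 - F2 - (F3 - F4)) + (y * (F1 - F3) + h * (F1 - F2)) := by ring
    rw [key]
    have t1 : ‖c a * (F1 - F2 - (F3 - F4))‖ ≤ ‖y‖ * ‖h‖ := by
      rw [norm_mul]
      calc ‖c a‖ * ‖F1 - F2 - (F3 - F4)‖ ≤ 1 * (‖y‖ * ‖h‖) :=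
            mul_le_mul hca (ih hcs) (norm_nonneg _) zero_le_one
        _ = ‖y‖ * ‖h‖ := one_mul _
    have t2 : ‖y * (F1 - F3)‖ ≤ ‖y‖ * ‖h‖ := by
      rw [norm_mul]
      refine mul_le_mul_of_nonneg_left ?_ (norm_nonneg y)
      have := Fdiff1 s' c (y + h) y hcs (le_trans (Padic.nonarchimedean _ _) (max_le hy hh)) hy
      simpa using this
    have t3 : ‖h * (F1 - F2)‖ ≤ ‖y‖ * ‖h‖ := by
      rw [norm_mul, mul_comm ‖y‖ ‖h‖]
      refine mul_le_mul_of_nonneg_left ?_ (norm_nonneg h)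
      have := Fdiff1 s' c (y + h) h hcs (le_trans (Padic.nonarchimedean _ _) (max_le hy hh)) hh
      simpa [add_sub_cancel_right] using this
    refine le_trans (Padic.nonarchimedean _ _) (max_le t1 ?_)
    exact le_trans (Padic.nonarchimedean _ _) (max_le t2 t3)

/-- linearization of a product perturbation -/
lemma prod_perturb {ι : Type*} [DecidableEq ι] (s : Finset ι) (W d : ι → ℚ_[p]) (ε : ℝ)
    (hε0 : 0 ≤ ε) (hε1 : ε ≤ 1)
    (hW : ∀ i ∈ s, ‖W i‖ ≤ 1) (hd : ∀ i ∈ s, ‖d i‖ ≤ ε) :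
    ‖∏ i ∈ s, (W i + d i) - ∏ i ∈ s, W i - ∑ i ∈ s, d i * ∏ j ∈ s.erase i, W j‖ ≤ ε ^ 2 := by
  classical
  induction s using Finset.induction_on with
  | empty => simpa using sq_nonneg ε |>.trans_eq' (by ring)
  | @insert a s' hx ih =>
    have hWs : ∀ i ∈ s', ‖W i‖ ≤ 1 := fun i hi => hW i (mem_insert_of_mem hi)
    have hds : ∀ i ∈ s', ‖d i‖ ≤ ε := fun i hi => hd i (mem_insert_of_mem hi)
    rw [Finset.prod_insert hx, Finset.prod_insert hx, Finset.sum_insert hx]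
    have herase : ∀ i ∈ s', (insert a s').erase i = insert a (s'.erase i) := by
      intro i hi
      exact Finset.erase_insert_of_ne (fun hai => hx (hai ▸ hi))
    have hsum : ∑ i ∈ s', d i * ∏ j ∈ (insert a s').erase i, W j
        = W a * ∑ i ∈ s', d i * ∏ j ∈ s'.erase i, W j := by
      rw [Finset.mul_sum]
      refine Finset.sum_congr rfl fun i hi => ?_
      rw [herase i hi, Finset.prod_insert (fun h => hx (Finset.mem_of_mem_erase h))]
      ring
    rw [Finset.erase_insert hx, hsum]
    set P := ∏ i ∈ s', (W i + d i)
    set Q := ∏ i ∈ s', W i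
    set L := ∑ i ∈ s', d i * ∏ j ∈ s'.erase i, W j
    have key : (W a + d a) * P - W a * Q - (d a * Q + W a * L)
        = W a * (P - Q - L) + d a * (P - Q) := by ring
    rw [key]
    have t1 : ‖W a * (P - Q - L)‖ ≤ ε ^ 2 := by
      rw [norm_mul]
      calc ‖W a‖ * ‖P - Q - L‖ ≤ 1 * ε ^ 2 :=
            mul_le_mul (hW a (mem_insert_self _ _)) (ih hWs hds) (norm_nonneg _) zero_le_one
        _ = ε ^ 2 := one_mul _
    have t2 : ‖d a * (P - Q)‖ ≤ ε ^ 2 := by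
      rw [norm_mul, sq]
      refine mul_le_mul (hd a (mem_insert_self _ _)) ?_ (norm_nonneg _) hε0
      refine norm_prod_sub_prod s' _ _ ε hε0 ?_ hWs ?_
      · intro i hi
        refine le_trans (Padic.nonarchimedean _ _) (max_le (hWs i hi) ?_)
        exact le_trans (hds i hi) hε1
      · intro i hi
        simpa using hds i hi
    exact le_trans (Padic.nonarchimedean _ _) (max_le t1 t2)

/-! ### norm helpers for powers of p -/

lemma ppow_pos (n : ℕ) : (0:ℝ) < (p:ℝ) ^ (-(n:ℤ)) := by
  have hp1 : (0:ℝ) < p := by exact_mod_cast hp.out.pos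
  positivity

lemma ppow_mono {a b : ℕ} (h : a ≤ b) : (p:ℝ) ^ (-(b:ℤ)) ≤ (p:ℝ) ^ (-(a:ℤ)) := by
  have hp1 : (1:ℝ) ≤ p := by exact_mod_cast hp.out.one_lt.le
  exact zpow_le_zpow_right₀ hp1 (by omega)

lemma ppow_le_one (n : ℕ) : (p:ℝ) ^ (-(n:ℤ)) ≤ 1 := by
  have hp1 : (1:ℝ) ≤ p := by exact_mod_cast hp.out.one_lt.le
  calc (p:ℝ) ^ (-(n:ℤ)) ≤ (p:ℝ) ^ (0:ℤ) := zpow_le_zpow_right₀ hp1 (by omega)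
    _ = 1 := zpow_zero _

lemma norm_p_pow_K (s : ℕ) : ‖((p:ℚ_[p]))^s‖ = (p:ℝ)^(-(s:ℤ)) := by
  rw [norm_pow, Padic.norm_p, zpow_neg, inv_pow, zpow_natCast]

lemma norm_int_le_ppow {z : ℤ} {n : ℕ} (h : ((p:ℤ)^n) ∣ z) : ‖(z:ℚ_[p])‖ ≤ (p:ℝ)^(-(n:ℤ)) :=
  (Padic.norm_int_le_pow_iff_dvd z n).2 (by exact_mod_cast h)

lemma norm_natCast_le_one (n : ℕ) : ‖(n:ℚ_[p])‖ ≤ 1 := by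
  exact_mod_cast Padic.norm_int_le_one (n : ℤ)

lemma mul_le_one_of (x y : ℚ_[p]) (hx : ‖x‖ ≤ 1) (hy : ‖y‖ ≤ 1) : ‖x * y‖ ≤ 1 := by
  rw [norm_mul]
  exact mul_le_one₀ hx (norm_nonneg _) hy

lemma mul_le_eps (x y : ℚ_[p]) (ε : ℝ) (hx : ‖x‖ ≤ 1) (hy : ‖y‖ ≤ ε) : ‖x * y‖ ≤ ε := by
  rw [norm_mul]
  calc ‖x‖ * ‖y‖ ≤ 1 * ε := mul_le_mul hx hy (norm_nonneg _) zero_le_one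
    _ = ε := one_mul _

/-! ### the `Vs` machinery -/

lemma facK_shift {s : ℕ} (hs : 1 ≤ s) (y : ℚ_[p]) (q i : ℕ) :
    facK p y 0 (p ^ s * q + i) = facK p (y + ((p ^ s * q : ℕ) : ℚ_[p])) 0 i := by
  obtain ⟨c, hc⟩ : p ∣ p ^ s := dvd_pow_self p (by omega)
  unfold facK
  have hmod : (p ^ s * q + i) % p = i % p := by
    rw [hc, mul_assoc, Nat.mul_add_mod]
  rw [hmod]
  split
  · rfl
  · push_cast
    ring

lemma Vs_succ {s : ℕ} (hs : 1 ≤ s) (y : ℚ_[p]) :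
    Vs p (s+1) y = ∏ q ∈ range p, Vs p s (y + ((p ^ s * q : ℕ) : ℚ_[p])) := by
  unfold Vs
  have hpow : p ^ (s+1) = p * p ^ s := by ring
  rw [hpow, prod_range_mul_blocks]
  exact Finset.prod_congr rfl fun q _ => Finset.prod_congr rfl fun r _ => facK_shift hs y q r

lemma Vs_norm_le (s : ℕ) (y : ℚ_[p]) (hy : ‖y‖ ≤ 1) : ‖Vs p s y‖ ≤ 1 :=
  norm_prod_le_one _ _ fun i _ => facK_norm_le y 0 i hy

lemma Vs_filter (s : ℕ) (y : ℚ_[p]) :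
    Vs p s y = ∏ i ∈ (range (p ^ s)).filter (fun i => ¬ i % p = 0), ((i : ℚ_[p]) + y) := by
  rw [Finset.prod_filter]
  refine Finset.prod_congr rfl fun i _ => ?_
  unfold facK
  by_cases h : i % p = 0 <;> simp [h, add_comm]

lemma Vs_sub_zero : ∀ s : ℕ, 1 ≤ s → ∀ y : ℚ_[p], ‖y‖ ≤ (p:ℝ)⁻¹ →
    ‖Vs p s y - Vs p s 0‖ ≤ (p:ℝ) ^ (-(s:ℤ)) := by
  intro s
  induction s with
  | zero => omega
  | succ s ih =>
    intro _ y hy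
    have hp1 : (1:ℝ) ≤ p := by exact_mod_cast hp.out.one_lt.le
    have hinv1 : ((p:ℝ))⁻¹ ≤ 1 := inv_le_one_of_one_le₀ hp1
    have hinv_eq : ((p:ℝ))⁻¹ = (p:ℝ) ^ (-((1:ℕ)):ℤ) := by norm_num
    rcases Nat.lt_or_ge s 1 with h1 | hs
    · -- base case s = 0
      have hs0 : s = 0 := by omega
      subst hs0
      have hgoal : (p:ℝ) ^ (-((0+1:ℕ)):ℤ) = (p:ℝ)⁻¹ := by norm_num
      rw [hgoal]
      refine norm_prod_sub_prod _ _ _ _ (by positivity)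
        (fun i _ => facK_norm_le _ _ _ (le_trans hy hinv1))
        (fun i _ => facK_norm_le _ _ _ (by simp)) ?_
      intro i _
      unfold facK
      split
      · simpa using by positivity
      · simpa [add_comm, add_sub_add_left_eq_sub] using hy
    · -- inductive step: s ≥ 1
      set ε : ℝ := (p:ℝ) ^ (-(s:ℤ)) with hε
      have hε0 : 0 ≤ ε := (ppow_pos s).le
      have hε1 : ε ≤ 1 := ppow_le_one s
      have hεp : ε ≤ (p:ℝ)⁻¹ := by rw [hε, hinv_eq]; exact ppow_mono hs
      have hp0 : (p:ℝ) ≠ 0 := by positivity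
      have hmul : (p:ℝ)⁻¹ * ε = (p:ℝ) ^ (-((s+1:ℕ)):ℤ) := by
        rw [hε, ← zpow_neg_one (p:ℝ), ← zpow_add₀ hp0]
        congr 1
        push_cast
        ring
      set S := (range (p ^ s)).filter (fun i => ¬ i % p = 0) with hSdef
      have hS : ∀ z : ℚ_[p], Vs p s z = ∏ i ∈ S, ((i:ℚ_[p]) + z) := fun z => Vs_filter s z
      have hS0 : Vs p s 0 = ∏ i ∈ S, ((i:ℚ_[p])) := by
        rw [hS 0]
        exact Finset.prod_congr rfl fun i _ => add_zero _
      set h : ℕ → ℚ_[p] := fun q => ((p ^ s * q : ℕ) : ℚ_[p]) with hh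
      have hnorm : ∀ q, ‖h q‖ ≤ ε := by
        intro q
        have : ((p:ℤ)^s) ∣ ((p ^ s * q : ℕ) : ℤ) := by
          push_cast
          exact Dvd.intro _ rfl
        exact norm_int_le_ppow this
      have hnorm1 : ∀ q, ‖h q‖ ≤ (p:ℝ)⁻¹ := fun q => le_trans (hnorm q) hεp
      have hnorm11 : ∀ q, ‖h q‖ ≤ 1 := fun q => le_trans (hnorm1 q) hinv1
      have hy1 : ‖y‖ ≤ 1 := le_trans hy hinv1
      have hyh : ∀ q, ‖y + h q‖ ≤ (p:ℝ)⁻¹ :=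
        fun q => le_trans (Padic.nonarchimedean _ _) (max_le hy (hnorm1 q))
      set W : ℕ → ℚ_[p] := fun q => Vs p s (h q) with hWdef
      set d : ℕ → ℚ_[p] := fun q => Vs p s (y + h q) - Vs p s (h q) with hddef
      have hW0 : W 0 = Vs p s 0 := by simp [hWdef, hh]
      have hWle : ∀ q, ‖W q‖ ≤ 1 := fun q => Vs_norm_le s _ (hnorm11 q)
      have hWW0 : ∀ q, ‖W q - W 0‖ ≤ ε := by
        intro q
        rw [hW0]
        exact ih hs _ (hnorm1 q)
      have hdle : ∀ q, ‖d q‖ ≤ ε := by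
        intro q
        have e1 : ‖Vs p s (y + h q) - Vs p s 0‖ ≤ ε := ih hs _ (hyh q)
        have e2 : ‖Vs p s (h q) - Vs p s 0‖ ≤ ε := ih hs _ (hnorm1 q)
        have heq : d q = (Vs p s (y + h q) - Vs p s 0) - (Vs p s (h q) - Vs p s 0) := by
          simp only [hddef]
          ring
        rw [heq]
        exact le_trans (norm_sub_le_max _ _) (max_le e1 e2)
      have hd0 : d 0 = Vs p s y - Vs p s 0 := by simp [hddef, hh]
      have hdd0 : ∀ q, ‖d q - d 0‖ ≤ (p:ℝ) ^ (-((s+1:ℕ)):ℤ) := by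
        intro q
        have key := Fdiff2 S (fun i => (i:ℚ_[p])) y (h q)
          (fun i _ => norm_natCast_le_one i) hy1 (hnorm11 q)
        have key' : ‖(∏ i ∈ S, ((i:ℚ_[p]) + (y + h q))) - (∏ i ∈ S, ((i:ℚ_[p]) + h q))
            - ((∏ i ∈ S, ((i:ℚ_[p]) + y)) - ∏ i ∈ S, ((i:ℚ_[p])))‖ ≤ ‖y‖ * ‖h q‖ := by
          simpa using key
        have e1 : d q - d 0 = (∏ i ∈ S, ((i:ℚ_[p]) + (y + h q))) - (∏ i ∈ S, ((i:ℚ_[p]) + h q))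
            - ((∏ i ∈ S, ((i:ℚ_[p]) + y)) - ∏ i ∈ S, ((i:ℚ_[p]))) := by
          rw [hd0]
          simp only [hddef]
          rw [hS (y + h q), hS (h q), hS y, hS0]
        rw [e1]
        refine le_trans key' ?_
        rw [← hmul]
        exact mul_le_mul hy (hnorm q) (norm_nonneg _) (by positivity)
      -- the main decomposition
      have hVsum : Vs p (s+1) y - Vs p (s+1) 0
          = (∏ q ∈ range p, (W q + d q) - ∏ q ∈ range p, W q
              - ∑ q ∈ range p, d q * ∏ j ∈ (range p).erase q, W j)
            + (∑ q ∈ range p, (d q - d 0) * ∏ j ∈ (range p).erase q, W j)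
            + (d 0 * ∑ q ∈ range p, ∏ j ∈ (range p).erase q, W j) := by
        have e1 : Vs p (s+1) y = ∏ q ∈ range p, (W q + d q) := by
          rw [Vs_succ hs y]
          refine Finset.prod_congr rfl fun q _ => ?_
          simp only [hddef, hWdef]
          ring
        have e2 : Vs p (s+1) 0 = ∏ q ∈ range p, W q := by
          rw [Vs_succ hs 0]
          refine Finset.prod_congr rfl fun q _ => ?_
          simp only [hWdef]
          rw [zero_add]
        have e3 : ∑ q ∈ range p, (d q - d 0) * ∏ j ∈ (range p).erase q, W j
            = (∑ q ∈ range p, d q * ∏ j ∈ (range p).erase q, W j)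
              - ∑ q ∈ range p, d 0 * ∏ j ∈ (range p).erase q, W j := by
          rw [← Finset.sum_sub_distrib]
          exact Finset.sum_congr rfl fun q _ => by ring
        have e4 : d 0 * ∑ q ∈ range p, ∏ j ∈ (range p).erase q, W j
            = ∑ q ∈ range p, d 0 * ∏ j ∈ (range p).erase q, W j := Finset.mul_sum _ _ _
        rw [e1, e2, e3, e4]
        ring
      rw [hVsum]
      have T1 : ‖∏ q ∈ range p, (W q + d q) - ∏ q ∈ range p, W q
          - ∑ q ∈ range p, d q * ∏ j ∈ (range p).erase q, W j‖ ≤ (p:ℝ) ^ (-((s+1:ℕ)):ℤ) := by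
        refine le_trans (prod_perturb (range p) W d ε hε0 hε1
          (fun q _ => hWle q) (fun q _ => hdle q)) ?_
        have : ε ^ 2 = (p:ℝ) ^ (-((2*s:ℕ)):ℤ) := by
          rw [hε, sq, ← zpow_add₀ hp0]
          congr 1
          push_cast
          ring
        rw [this]
        exact ppow_mono (by omega)
      have T2 : ‖∑ q ∈ range p, (d q - d 0) * ∏ j ∈ (range p).erase q, W j‖
          ≤ (p:ℝ) ^ (-((s+1:ℕ)):ℤ) := by
        refine norm_sum_le _ _ _ (ppow_pos _).le ?_
        intro q _
        rw [norm_mul]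
        calc ‖d q - d 0‖ * ‖∏ j ∈ (range p).erase q, W j‖
            ≤ (p:ℝ) ^ (-((s+1:ℕ)):ℤ) * 1 :=
              mul_le_mul (hdd0 q) (norm_prod_le_one _ _ fun j _ => hWle j)
                (norm_nonneg _) (ppow_pos _).le
          _ = _ := mul_one _
      have T3 : ‖d 0 * ∑ q ∈ range p, ∏ j ∈ (range p).erase q, W j‖
          ≤ (p:ℝ) ^ (-((s+1:ℕ)):ℤ) := by
        have hsum : ‖∑ q ∈ range p, ∏ j ∈ (range p).erase q, W j‖ ≤ (p:ℝ)⁻¹ := by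
          have hsplit : ∑ q ∈ range p, ∏ j ∈ (range p).erase q, W j
              = (∑ q ∈ range p, (∏ j ∈ (range p).erase q, W j - W 0 ^ (p-1)))
                + (p:ℚ_[p]) * W 0 ^ (p-1) := by
            rw [Finset.sum_sub_distrib]
            rw [Finset.sum_const, Finset.card_range, nsmul_eq_mul]
            ring
          rw [hsplit]
          refine le_trans (Padic.nonarchimedean _ _) (max_le ?_ ?_)
          · refine le_trans (norm_sum_le _ _ ε hε0 ?_) hεp
            intro q hq
            have hconst : ∏ j ∈ (range p).erase q, (W 0) = W 0 ^ (p-1) := by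
              rw [Finset.prod_const, Finset.card_erase_of_mem hq, Finset.card_range]
            rw [← hconst]
            exact norm_prod_sub_prod _ _ _ ε hε0 (fun j _ => hWle j) (fun j _ => hWle 0)
              (fun j _ => hWW0 j)
          · rw [norm_mul]
            calc ‖(p:ℚ_[p])‖ * ‖W 0 ^ (p-1)‖ ≤ (p:ℝ)⁻¹ * 1 := by
                  refine mul_le_mul (le_of_eq Padic.norm_p) ?_ (norm_nonneg _) (by positivity)
                  rw [norm_pow]
                  exact pow_le_one₀ (norm_nonneg _) (hWle 0)
              _ = (p:ℝ)⁻¹ := mul_one _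
        rw [norm_mul, ← hmul, mul_comm ((p:ℝ)⁻¹) ε]
        exact mul_le_mul (hdle 0) hsum (norm_nonneg _) hε0
      refine le_trans (Padic.nonarchimedean _ _) (max_le (le_trans (Padic.nonarchimedean _ _) (max_le T1 T2)) T3)

lemma Vs_diff {s : ℕ} (hs : 1 ≤ s) {y1 y2 : ℚ_[p]} (h1 : ‖y1‖ ≤ (p:ℝ)⁻¹)
    (h2 : ‖y2‖ ≤ (p:ℝ)⁻¹) : ‖Vs p s y1 - Vs p s y2‖ ≤ (p:ℝ) ^ (-(s:ℤ)) := by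
  have e : Vs p s y1 - Vs p s y2 = (Vs p s y1 - Vs p s 0) - (Vs p s y2 - Vs p s 0) := by ring
  rw [e]
  exact le_trans (norm_sub_le_max _ _) (max_le (Vs_sub_zero s hs y1 h1) (Vs_sub_zero s hs y2 h2))

lemma mod_iff_zmod {N u₀ : ℕ} (hu₀ : u₀ < p) : N % p = u₀ ↔ ((p:ℤ) ∣ (N:ℤ) - u₀) := by
  rw [← ZMod.intCast_zmod_eq_zero_iff_dvd]
  push_cast
  rw [sub_eq_zero]
  rw [ZMod.natCast_eq_natCast_iff]
  unfold Nat.ModEq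
  rw [Nat.mod_eq_of_lt hu₀]

lemma norm_x_add_unit {x : ℚ_[p]} {u₀ N : ℕ} (hxu : ‖x + u₀‖ ≤ (p:ℝ)⁻¹) (hu₀ : u₀ < p)
    (hN : ¬ N % p = u₀) : ‖x + N‖ = 1 := by
  have hint : ‖(((N:ℤ) - u₀ : ℤ) : ℚ_[p])‖ = 1 := by
    refine le_antisymm (Padic.norm_int_le_one _) ?_
    by_contra hlt
    push_neg at hlt
    exact hN ((mod_iff_zmod hu₀).2 (Padic.norm_intCast_lt_one_iff.1 hlt))
  have hdec : x + N = (x + u₀) + (((N:ℤ) - u₀ : ℤ) : ℚ_[p]) := by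
    push_cast
    ring
  have hplt : ((p:ℝ))⁻¹ < 1 := by
    have : (1:ℝ) < p := by exact_mod_cast hp.out.one_lt
    rw [inv_lt_one_iff₀]
    right
    exact this
  rw [hdec, Padic.add_eq_max_of_ne, hint, max_eq_right]
  · exact le_of_lt (lt_of_le_of_lt hxu hplt)
  · rw [hint]
    exact ne_of_lt (lt_of_le_of_lt hxu hplt)

lemma block_norm_le (x : ℚ_[p]) (u₀ N L : ℕ) (hx : ‖x‖ ≤ 1) :
    ‖∏ i ∈ range L, facK p x u₀ (N + i)‖ ≤ 1 :=
  norm_prod_le_one _ _ fun i _ => facK_norm_le x u₀ _ hx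

lemma block_slide_step {s : ℕ} (hs : 1 ≤ s) {x : ℚ_[p]} {u₀ : ℕ} (hx : ‖x‖ ≤ 1)
    (hxu : ‖x + u₀‖ ≤ (p:ℝ)⁻¹) (hu₀ : u₀ < p) (N : ℕ) :
    ‖(∏ i ∈ range (p^s), facK p x u₀ (N + 1 + i)) - ∏ i ∈ range (p^s), facK p x u₀ (N + i)‖
      ≤ (p:ℝ) ^ (-(s:ℤ)) := by
  have key : (∏ i ∈ range (p^s), facK p x u₀ (N + 1 + i)) * facK p x u₀ N
      = (∏ i ∈ range (p^s), facK p x u₀ (N + i)) * facK p x u₀ (N + p^s) := by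
    have e1 : (∏ i ∈ range (p^s), facK p x u₀ (N + i)) * facK p x u₀ (N + p^s)
        = ∏ i ∈ range (p^s + 1), facK p x u₀ (N + i) := (Finset.prod_range_succ _ _).symm
    have e2 : ∏ i ∈ range (p^s + 1), facK p x u₀ (N + i)
        = (∏ i ∈ range (p^s), facK p x u₀ (N + 1 + i)) * facK p x u₀ N := by
      rw [Finset.prod_range_succ']
      congr 1
      exact Finset.prod_congr rfl fun i _ => by ring_nf
    rw [e1, e2]
  have hfdiff : ‖facK p x u₀ (N + p^s) - facK p x u₀ N‖ ≤ (p:ℝ) ^ (-(s:ℤ)) := by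
    have hmod : (N + p^s) % p = N % p := by
      obtain ⟨c, hc⟩ : p ∣ p ^ s := dvd_pow_self p (by omega)
      rw [hc, Nat.add_mul_mod_self_left]
    unfold facK
    rw [hmod]
    split
    · simpa using (ppow_pos (p := p) s).le
    · have : x + ((N + p^s : ℕ):ℚ_[p]) - (x + (N:ℚ_[p])) = ((p:ℚ_[p]))^s := by
        push_cast
        ring
      rw [this, norm_p_pow_K]
  by_cases hbr : N % p = u₀
  · -- facK p x u₀ N = 1
    have hone : facK p x u₀ N = 1 := by unfold facK; rw [if_pos hbr]
    have : (∏ i ∈ range (p^s), facK p x u₀ (N + 1 + i)) - ∏ i ∈ range (p^s), facK p x u₀ (N + i)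
        = (∏ i ∈ range (p^s), facK p x u₀ (N + i)) * (facK p x u₀ (N + p^s) - facK p x u₀ N) := by
      rw [mul_sub]
      rw [← key, hone]
      ring
    rw [this]
    exact mul_le_eps _ _ _ (block_norm_le x u₀ N _ hx) hfdiff
  · have hunit : ‖facK p x u₀ N‖ = 1 := by
      unfold facK
      rw [if_neg hbr]
      exact norm_x_add_unit hxu hu₀ hbr
    have : ((∏ i ∈ range (p^s), facK p x u₀ (N + 1 + i)) - ∏ i ∈ range (p^s), facK p x u₀ (N + i))
        * facK p x u₀ N
        = (∏ i ∈ range (p^s), facK p x u₀ (N + i)) * (facK p x u₀ (N + p^s) - facK p x u₀ N) := by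
      rw [sub_mul, key]
      ring
    have hn := congrArg (fun z => ‖z‖) this
    simp only [norm_mul, hunit, mul_one] at hn
    rw [hn]
    calc ‖∏ i ∈ range (p^s), facK p x u₀ (N + i)‖ * ‖facK p x u₀ (N + p^s) - facK p x u₀ N‖
        ≤ 1 * ((p:ℝ) ^ (-(s:ℤ))) :=
          mul_le_mul (block_norm_le x u₀ N _ hx) hfdiff (norm_nonneg _) zero_le_one
      _ = _ := one_mul _

lemma block_slide {s : ℕ} (hs : 1 ≤ s) {x : ℚ_[p]} {u₀ : ℕ} (hx : ‖x‖ ≤ 1)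
    (hxu : ‖x + u₀‖ ≤ (p:ℝ)⁻¹) (hu₀ : u₀ < p) (N : ℕ) :
    ‖(∏ i ∈ range (p^s), facK p x u₀ (N + i)) - ∏ i ∈ range (p^s), facK p x u₀ i‖
      ≤ (p:ℝ) ^ (-(s:ℤ)) := by
  induction N with
  | zero => simpa using (ppow_pos (p := p) s).le
  | succ n ih =>
    have e : (∏ i ∈ range (p^s), facK p x u₀ (n + 1 + i)) - ∏ i ∈ range (p^s), facK p x u₀ i
        = ((∏ i ∈ range (p^s), facK p x u₀ (n + 1 + i)) - ∏ i ∈ range (p^s), facK p x u₀ (n + i))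
          + ((∏ i ∈ range (p^s), facK p x u₀ (n + i)) - ∏ i ∈ range (p^s), facK p x u₀ i) := by
      ring
    rw [e]
    exact le_trans (Padic.nonarchimedean _ _)
      (max_le (block_slide_step hs hx hxu hu₀ n) ih)

lemma prod_range_rotate (h : ℕ → ℚ_[p]) {n k : ℕ} (hn : 0 < n) (hk : k ≤ n) :
    ∏ i ∈ range n, h ((i + k) % n) = ∏ i ∈ range n, h i := by
  refine Finset.prod_nbij' (fun i => (i + k) % n) (fun i => (i + (n - k)) % n)
    ?_ ?_ ?_ ?_ ?_
  · intro a _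
    exact Finset.mem_range.2 (Nat.mod_lt _ hn)
  · intro a _
    exact Finset.mem_range.2 (Nat.mod_lt _ hn)
  · intro a ha
    show ((a + k) % n + (n - k)) % n = a
    rw [Nat.mod_add_mod, add_assoc, Nat.add_sub_cancel' hk, Nat.add_mod_right]
    exact Nat.mod_eq_of_lt (Finset.mem_range.1 ha)
  · intro a ha
    show ((a + (n - k)) % n + k) % n = a
    rw [Nat.mod_add_mod, add_assoc, Nat.sub_add_cancel hk, Nat.add_mod_right]
    exact Nat.mod_eq_of_lt (Finset.mem_range.1 ha)
  · intro a _
    rfl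

lemma block_center {s : ℕ} (hs : 1 ≤ s) {x : ℚ_[p]} {u₀ : ℕ} (hx : ‖x‖ ≤ 1)
    (hxu : ‖x + u₀‖ ≤ (p:ℝ)⁻¹) (hu₀ : u₀ < p) :
    ‖(∏ i ∈ range (p^s), facK p x u₀ i) - Vs p s (x + (u₀:ℚ_[p]))‖ ≤ (p:ℝ) ^ (-(s:ℤ)) := by
  have hn0 : 0 < p ^ s := pow_pos hp.out.pos s
  have hu₀n : u₀ ≤ p ^ s := le_trans (le_of_lt hu₀) (Nat.le_self_pow (by omega) p)
  have hu₀ns : (u₀:ℤ) ≤ ((p^s : ℕ):ℤ) := by exact_mod_cast hu₀n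
  have hdvd : (p:ℤ) ∣ ((p:ℤ)^s) := dvd_pow_self _ (by omega)
  have hVs : Vs p s (x + (u₀:ℚ_[p]))
      = ∏ i ∈ range (p^s), facK p (x + (u₀:ℚ_[p])) 0 ((i + (p^s - u₀)) % p^s) :=
    (prod_range_rotate (facK p (x + (u₀:ℚ_[p])) 0) hn0 (Nat.sub_le _ _)).symm
  rw [hVs]
  refine norm_prod_sub_prod _ _ _ _ (ppow_pos _).le
    (fun i _ => facK_norm_le _ _ _ hx)
    (fun i _ => facK_norm_le _ _ _ (le_trans hxu (le_trans (by
      have hp1 : (1:ℝ) ≤ p := by exact_mod_cast hp.out.one_lt.le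
      exact inv_le_one_of_one_le₀ hp1) (le_refl 1)))) ?_
  intro i _
  set i' : ℕ := (i + (p^s - u₀)) % p^s with hi'
  -- key divisibility : (p^s : ℤ) ∣ (i - u₀ - i')
  have hkey : ((p:ℤ)^s) ∣ ((i:ℤ) - u₀ - i') := by
    set q : ℕ := (i + (p^s - u₀)) / (p^s) with hq
    have hdm : i' + (p^s) * q = i + (p^s - u₀) := by
      rw [hi', hq]
      exact Nat.mod_add_div _ _
    have hz : (i':ℤ) + (p:ℤ)^s * q = (i:ℤ) + ((p:ℤ)^s - u₀) := by
      have h2 := congrArg (fun m : ℕ => (m : ℤ)) hdm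
      push_cast [Nat.cast_sub hu₀n] at h2
      linarith
    have : (i:ℤ) - u₀ - i' = (p:ℤ)^s * ((q:ℤ) - 1) := by linarith
    rw [this]
    exact Dvd.intro _ rfl
  have hpdvd_i' : ((p:ℤ) ∣ (i':ℤ)) ↔ ((p:ℤ) ∣ ((i:ℤ) - u₀)) := by
    obtain ⟨t, ht⟩ := hkey
    obtain ⟨c, hc⟩ : (p:ℤ) ∣ (p:ℤ)^s := hdvd
    constructor
    · intro ⟨w, hw⟩
      refine ⟨w + c * t, ?_⟩
      have : (i:ℤ) - u₀ = i' + (p:ℤ)^s * t := by linarith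
      rw [this, hw, hc]
      ring
    · intro ⟨w, hw⟩
      refine ⟨w - c * t, ?_⟩
      have : (i':ℤ) = ((i:ℤ) - u₀) - (p:ℤ)^s * t := by linarith
      rw [this, hw, hc]
      ring
  have hbranch : (i % p = u₀) ↔ (i' % p = 0) := by
    rw [mod_iff_zmod hu₀]
    have h3 : (i' % p = 0) ↔ (p:ℤ) ∣ (i':ℤ) := by
      rw [← Nat.dvd_iff_mod_eq_zero]
      exact Int.natCast_dvd_natCast.symm
    rw [h3, hpdvd_i']
  unfold facK
  by_cases hcase : i % p = u₀
  · rw [if_pos hcase, if_pos (hbranch.1 hcase)]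
    simpa using (ppow_pos (p := p) s).le
  · rw [if_neg hcase, if_neg (fun h0 => hcase (hbranch.2 h0))]
    have : x + (i:ℚ_[p]) - (x + (u₀:ℚ_[p]) + (i':ℚ_[p])) = (((i:ℤ) - u₀ - i' : ℤ) : ℚ_[p]) := by
      push_cast
      ring
    rw [this]
    refine norm_int_le_ppow ?_
    exact_mod_cast hkey

/-- a "digit pair": `x` integral with `x + u₀ ≡ 0 mod p`, `u₀ < p` -/
structure DigitPair (q : ℕ) [Fact q.Prime] where
  x : ℚ_[q]
  u₀ : ℕ
  hx : ‖x‖ ≤ 1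
  hxu : ‖x + u₀‖ ≤ (q:ℝ)⁻¹
  hu₀ : u₀ < q

lemma block_cmp {s : ℕ} (hs : 1 ≤ s) (D₁ D₂ : DigitPair p) (M₁ M₂ : ℕ) :
    ‖(∏ i ∈ range (p^s), facK p D₁.x D₁.u₀ (M₁ + i))
      - ∏ i ∈ range (p^s), facK p D₂.x D₂.u₀ (M₂ + i)‖ ≤ (p:ℝ) ^ (-(s:ℤ)) := by
  obtain ⟨x₁, u₁, hx₁, hxu₁, hu₁⟩ := D₁
  obtain ⟨x₂, u₂, hx₂, hxu₂, hu₂⟩ := D₂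
  simp only
  have e : (∏ i ∈ range (p^s), facK p x₁ u₁ (M₁ + i)) - ∏ i ∈ range (p^s), facK p x₂ u₂ (M₂ + i)
      = ((∏ i ∈ range (p^s), facK p x₁ u₁ (M₁ + i)) - ∏ i ∈ range (p^s), facK p x₁ u₁ i)
        + (((∏ i ∈ range (p^s), facK p x₁ u₁ i) - Vs p s (x₁ + (u₁:ℚ_[p])))
        + ((Vs p s (x₁ + (u₁:ℚ_[p])) - Vs p s (x₂ + (u₂:ℚ_[p])))
        + ((Vs p s (x₂ + (u₂:ℚ_[p])) - ∏ i ∈ range (p^s), facK p x₂ u₂ i)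
        + ((∏ i ∈ range (p^s), facK p x₂ u₂ i) - ∏ i ∈ range (p^s), facK p x₂ u₂ (M₂ + i))))) := by
    ring
  rw [e]
  refine le_trans (Padic.nonarchimedean _ _) (max_le (block_slide hs hx₁ hxu₁ hu₁ M₁) ?_)
  refine le_trans (Padic.nonarchimedean _ _) (max_le (block_center hs hx₁ hxu₁ hu₁) ?_)
  refine le_trans (Padic.nonarchimedean _ _) (max_le (Vs_diff hs hxu₁ hxu₂) ?_)
  refine le_trans (Padic.nonarchimedean _ _) (max_le ?_ ?_)
  · rw [norm_sub_rev]
    exact block_center hs hx₂ hxu₂ hu₂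
  · rw [norm_sub_rev]
    exact block_slide hs hx₂ hxu₂ hu₂ M₂

lemma window_diff {s : ℕ} (hs : 1 ≤ s) (D₁ D₂ : DigitPair p) (N c : ℕ) :
    ‖(∏ i ∈ range (c * p^s), facK p D₁.x D₁.u₀ (N + i))
      - ∏ i ∈ range (c * p^s), facK p D₂.x D₂.u₀ (N + i)‖ ≤ (p:ℝ) ^ (-(s:ℤ)) := by
  have e1 : ∀ (D : DigitPair p), ∏ i ∈ range (c * p^s), facK p D.x D.u₀ (N + i)
      = ∏ q ∈ range c, ∏ r ∈ range (p^s), facK p D.x D.u₀ ((N + p^s * q) + r) := by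
    intro D
    rw [prod_range_mul_blocks]
    exact Finset.prod_congr rfl fun q _ => Finset.prod_congr rfl fun r _ => by ring_nf
  rw [e1, e1]
  refine norm_prod_sub_prod _ _ _ _ (ppow_pos _).le ?_ ?_ ?_
  · exact fun q _ => block_norm_le _ _ _ _ D₁.hx
  · exact fun q _ => block_norm_le _ _ _ _ D₂.hx
  · exact fun q _ => block_cmp hs D₁ D₂ _ _

/-! ### rational-side facts -/

lemma norm_nat_unit {d : ℕ} (hd : ¬ p ∣ d) : ‖((d:ℕ):ℚ_[p])‖ = 1 := by
  refine le_antisymm (norm_natCast_le_one d) ?_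
  by_contra hlt
  push_neg at hlt
  have := (Padic.norm_intCast_lt_one_iff (k := (d:ℤ))).1 (by exact_mod_cast hlt)
  exact hd (by exact_mod_cast this)

lemma norm_rat_le_one {r : ℚ} (h : ¬ p ∣ r.den) : ‖(r:ℚ_[p])‖ ≤ 1 := by
  rw [Rat.cast_def, norm_div, norm_nat_unit h, div_one]
  exact Padic.norm_int_le_one _

lemma not_dvd_den_of_norm_le_one {r : ℚ} (h : ‖(r:ℚ_[p])‖ ≤ 1) : ¬ p ∣ r.den := by
  intro hdvd
  have hnum : ‖((r.num:ℤ):ℚ_[p])‖ = 1 := by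
    refine le_antisymm (Padic.norm_int_le_one _) ?_
    by_contra hlt
    push_neg at hlt
    have hdvdnum := Padic.norm_intCast_lt_one_iff.1 hlt
    have h1 : (p:ℤ) ∣ (r.num.natAbs : ℤ) := (Int.dvd_natAbs).2 hdvdnum
    have h2 : p ∣ r.num.natAbs := by exact_mod_cast h1
    have h3 : p ∣ Nat.gcd r.num.natAbs r.den := Nat.dvd_gcd h2 hdvd
    rw [r.reduced] at h3
    exact hp.out.ne_one (Nat.eq_one_of_dvd_one h3)
  have hden : ‖((r.den:ℕ):ℚ_[p])‖ ≤ (p:ℝ)⁻¹ := by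
    have : ((p:ℤ)^1) ∣ ((r.den:ℕ):ℤ) := by
      rw [pow_one]
      exact_mod_cast hdvd
    have := norm_int_le_ppow (p := p) this
    simpa using this
  have hrnorm : ‖(r:ℚ_[p])‖ = ‖((r.num:ℤ):ℚ_[p])‖ / ‖((r.den:ℕ):ℚ_[p])‖ := by
    rw [Rat.cast_def, norm_div]
  have hdenpos : (0:ℝ) < ‖((r.den:ℕ):ℚ_[p])‖ := by
    rw [norm_pos_iff]
    exact_mod_cast (Nat.cast_ne_zero (R := ℚ_[p])).2 r.den_nz
  rw [hrnorm, hnum] at h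
  rw [div_le_one hdenpos] at h
  have hp1 : (1:ℝ) < p := by exact_mod_cast hp.out.one_lt
  have : (1:ℝ) ≤ (p:ℝ)⁻¹ := le_trans h hden
  have h2 : (p:ℝ)⁻¹ < 1 := by
    rw [inv_lt_one_iff₀]
    right
    exact hp1
  linarith

lemma firstDigit_lt (r : ℚ) : firstDigit p r < p := ZMod.val_lt _

lemma dash_exact (r : ℚ) : (p:ℚ) * dworkDash p r = r + (firstDigit p (-r) : ℕ) := by
  unfold dworkDash
  have : (p:ℚ) ≠ 0 := by exact_mod_cast hp.out.ne_zero
  field_simp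

lemma digit_norm {r : ℚ} (hden : ¬ p ∣ r.den) :
    ‖(r:ℚ_[p]) + ((firstDigit p (-r) : ℕ):ℚ_[p])‖ ≤ (p:ℝ)⁻¹ := by
  set u₀ := firstDigit p (-r) with hu₀def
  set z : ℤ := r.num + (u₀:ℤ) * r.den with hzdef
  have hdK : ((r.den:ℕ):ℚ_[p]) ≠ 0 := by
    exact_mod_cast (Nat.cast_ne_zero (R := ℚ_[p])).2 r.den_nz
  have hzdvd : (p:ℤ) ∣ z := by
    rw [← ZMod.intCast_zmod_eq_zero_iff_dvd]
    have hcast : ((z:ℤ) : ZMod p) = (r.num : ZMod p) + (u₀ : ZMod p) * (r.den : ZMod p) := by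
      rw [hzdef]
      push_cast
      ring
    rw [hcast]
    have hu₀cast : ((u₀:ℕ) : ZMod p) = -((r : ℚ) : ZMod p) := by
      rw [hu₀def]
      unfold firstDigit
      rw [ZMod.natCast_val, ZMod.cast_id]
      push_cast
      ring
    have hdunit : ((r.den : ℕ) : ZMod p) ≠ 0 := by
      rw [Ne, ZMod.natCast_eq_zero_iff]
      exact hden
    have hratcast : ((r:ℚ) : ZMod p) * (r.den : ZMod p) = (r.num : ZMod p) := by
      rw [Rat.cast_def, div_mul_cancel₀ _ hdunit]
    rw [hu₀cast, hratcast.symm]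
    ring
  have hsplit : (r:ℚ_[p]) + ((u₀:ℕ):ℚ_[p]) = ((z:ℤ):ℚ_[p]) / ((r.den:ℕ):ℚ_[p]) := by
    have hzK : ((z:ℤ):ℚ_[p]) = (r.num:ℚ_[p]) + ((u₀:ℕ):ℚ_[p]) * ((r.den:ℕ):ℚ_[p]) := by
      rw [hzdef]
      push_cast
      ring
    rw [Rat.cast_def, hzK]
    field_simp
  rw [hsplit, norm_div, norm_nat_unit hden, div_one]
  have h9 : ((p:ℤ)^1) ∣ z := by
    rw [pow_one]
    exact hzdvd
  have h10 := norm_int_le_ppow (p := p) h9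
  rw [show ((p:ℝ)^(-((1:ℕ)):ℤ)) = (p:ℝ)⁻¹ by norm_num] at h10
  exact h10

/-! ### rising factorial splitting -/

lemma risingFact_cast (a : ℚ) (k : ℕ) :
    ((risingFact a k : ℚ) : ℚ_[p]) = ∏ i ∈ range k, ((a:ℚ_[p]) + i) := by
  unfold risingFact
  push_cast
  rfl

lemma risingFact_one_eq (k : ℕ) : risingFact 1 k = (k.factorial : ℚ) := by
  induction k with
  | zero => simp [risingFact]
  | succ n ih =>
    unfold risingFact at ih ⊢
    rw [Finset.prod_range_succ, ih, Nat.factorial_succ]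
    push_cast
    ring

lemma risingFact_pos {a : ℚ} (ha : 0 < a) (k : ℕ) : 0 < risingFact a k := by
  unfold risingFact
  exact Finset.prod_pos fun i _ => by positivity

lemma factorial_cast_eq (k : ℕ) :
    ((k.factorial : ℕ) : ℚ_[p]) = ∏ i ∈ range k, ((1:ℚ_[p]) + i) := by
  have h1 := risingFact_cast (p := p) 1 k
  rw [risingFact_one_eq] at h1
  push_cast at h1 ⊢
  exact h1

lemma digit_lt {u u₀ l v : ℕ} (hu : u < p) (hu₀ : u₀ < p) :
    u₀ + p * l < u + p * v ↔ l < v + (if u₀ < u then 1 else 0) := by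
  split
  · rename_i hlt
    constructor
    · intro h
      by_contra hc
      push_neg at hc
      have hlv : v + 1 ≤ l := hc
      have : p * (v+1) ≤ p * l := Nat.mul_le_mul_left _ hlv
      have h2 : p * v + p ≤ p * l := by
        rw [Nat.mul_add, Nat.mul_one] at this
        omega
      omega
    · intro h
      have hlv : l ≤ v := by omega
      have : p * l ≤ p * v := Nat.mul_le_mul_left _ hlv
      omega
  · rename_i hge
    push_neg at hge
    rw [Nat.add_zero]
    constructor
    · intro h
      by_contra hc
      push_neg at hc
      have : p * v ≤ p * l := Nat.mul_le_mul_left _ hc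
      omega
    · intro h
      have h1 : l + 1 ≤ v := h
      have : p * (l+1) ≤ p * v := Nat.mul_le_mul_left _ h1
      rw [Nat.mul_add, Nat.mul_one] at this
      omega

lemma filter_digit_eq {u u₀ v : ℕ} (hu : u < p) (hu₀ : u₀ < p) :
    (range (u + p * v)).filter (fun i => i % p = u₀)
      = (range (v + (if u₀ < u then 1 else 0))).map
          ⟨fun l => u₀ + p * l, fun a b hab => by
            simpa [Nat.add_mul_div_left _ _ hp.out.pos, Nat.div_eq_of_lt hu₀]
              using congrArg (· / p) hab⟩ := by
  ext j
  simp only [Finset.mem_filter, Finset.mem_range, Finset.mem_map, Function.Embedding.coeFn_mk]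
  constructor
  · rintro ⟨hj, hmod⟩
    refine ⟨j / p, ?_, ?_⟩
    · rw [← digit_lt hu hu₀ (l := j / p) (v := v)]
      have : u₀ + p * (j / p) = j := by
        conv_rhs => rw [← Nat.mod_add_div j p, hmod]
      rw [this]
      exact hj
    · show u₀ + p * (j / p) = j
      conv_rhs => rw [← Nat.mod_add_div j p, hmod]
  · rintro ⟨l, hl, rfl⟩
    refine ⟨(digit_lt hu hu₀).2 hl, ?_⟩
    show (u₀ + p * l) % p = u₀
    rw [Nat.add_mul_mod_self_left, Nat.mod_eq_of_lt hu₀]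

lemma prod_split {x xd : ℚ_[p]} {u₀ : ℕ} (hu₀ : u₀ < p) (hpx : (p:ℚ_[p]) * xd = x + u₀)
    {u : ℕ} (hu : u < p) (v : ℕ) :
    ∏ i ∈ range (u + p*v), (x + (i:ℚ_[p]))
      = (p:ℚ_[p])^(v + (if u₀ < u then 1 else 0))
        * (∏ l ∈ range (v + (if u₀ < u then 1 else 0)), (xd + (l:ℚ_[p])))
        * ∏ i ∈ range (u + p*v), facK p x u₀ i := by
  have hpt : ∀ i : ℕ, x + (i:ℚ_[p])
      = (if i % p = u₀ then x + (i:ℚ_[p]) else 1) * facK p x u₀ i := by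
    intro i
    unfold facK
    by_cases h : i % p = u₀ <;> simp [h]
  calc ∏ i ∈ range (u + p*v), (x + (i:ℚ_[p]))
      = ∏ i ∈ range (u + p*v), ((if i % p = u₀ then x + (i:ℚ_[p]) else 1) * facK p x u₀ i) :=
        Finset.prod_congr rfl fun i _ => hpt i
    _ = (∏ i ∈ range (u + p*v), (if i % p = u₀ then x + (i:ℚ_[p]) else 1))
          * ∏ i ∈ range (u + p*v), facK p x u₀ i := Finset.prod_mul_distrib
    _ = _ := by
        congr 1
        rw [← Finset.prod_filter (fun i => i % p = u₀) (fun i => x + (i:ℚ_[p]))]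
        rw [filter_digit_eq hu hu₀, Finset.prod_map]
        show ∏ l ∈ range (v + (if u₀ < u then 1 else 0)), (x + ((u₀ + p * l : ℕ) : ℚ_[p])) = _
        have : ∀ l : ℕ, x + ((u₀ + p * l : ℕ):ℚ_[p]) = (p:ℚ_[p]) * (xd + (l:ℚ_[p])) := by
          intro l
          push_cast
          linear_combination -hpx
        rw [Finset.prod_congr rfl (fun l _ => this l), Finset.prod_mul_distrib,
          Finset.prod_const, Finset.card_range]

/-! ### the ratio function R -/

/-- `(a)_k / k!` as a `p`-adic number -/
noncomputable def gK (q : ℕ) [Fact q.Prime] (a : ℚ) (k : ℕ) : ℚ_[q] :=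
  ((risingFact a k : ℚ) : ℚ_[q]) / ((k.factorial : ℕ) : ℚ_[q])

/-- unit part of `(a)_k` -/
noncomputable def UNa (q : ℕ) [Fact q.Prime] (a : ℚ) (k : ℕ) : ℚ_[q] :=
  ∏ i ∈ Finset.range k, facK q (a:ℚ_[q]) (firstDigit q (-a)) i

/-- unit part of `k!` -/
noncomputable def UN1 (q : ℕ) [Fact q.Prime] (k : ℕ) : ℚ_[q] :=
  ∏ i ∈ Finset.range k, facK q 1 (q-1) i

/-- the carry indicator δ -/
def dig (q : ℕ) [Fact q.Prime] (a : ℚ) (u : ℕ) : ℕ := if firstDigit q (-a) < u then 1 else 0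

/-- the Dwork ratio `R_a(u,v)` -/
noncomputable def RK (q : ℕ) [Fact q.Prime] (a : ℚ) (u v : ℕ) : ℚ_[q] :=
  ((q:ℚ_[q]) * (((dworkDash q a : ℚ):ℚ_[q]) + (v:ℚ_[q])))^(dig q a u)
    * UNa q a (u + q*v) / UN1 q (u + q*v)

lemma one_add_pm1 : (1:ℚ_[p]) + (((p-1:ℕ)):ℚ_[p]) = (p:ℚ_[p]) := by
  have h1 : 1 ≤ p := hp.out.one_lt.le
  have : (((p-1:ℕ)):ℚ_[p]) = (p:ℚ_[p]) - 1 := by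
    push_cast [Nat.cast_sub h1]
    ring
  rw [this]
  ring

lemma one_pm1_norm : ‖(1:ℚ_[p]) + (((p-1:ℕ)):ℚ_[p])‖ ≤ (p:ℝ)⁻¹ := by
  rw [one_add_pm1]
  exact le_of_eq Padic.norm_p

lemma pm1_lt : p - 1 < p := by
  have := hp.out.one_lt
  omega

/-- the digit pair for the parameter `1` (giving factorials) -/
noncomputable def oneDigit : DigitPair p := ⟨1, p-1, by simp, one_pm1_norm, pm1_lt⟩

/-- the digit pair for a parameter `a` -/
noncomputable def aDigit (a : ℚ) (hden : ¬ p ∣ a.den) : DigitPair p :=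
  ⟨(a:ℚ_[p]), firstDigit p (-a), norm_rat_le_one hden, digit_norm hden, firstDigit_lt _⟩

lemma facK_one_norm (j : ℕ) : ‖facK p 1 (p-1) j‖ = 1 := by
  unfold facK
  split
  · simp
  · rename_i h
    exact norm_x_add_unit one_pm1_norm pm1_lt h

lemma UN1_window_norm (N L : ℕ) : ‖∏ i ∈ range L, facK p 1 (p-1) (N+i)‖ = 1 := by
  rw [norm_prod]
  rw [Finset.prod_congr rfl (fun i _ => facK_one_norm (N+i))]
  exact Finset.prod_const_one

lemma UN1_norm (k : ℕ) : ‖UN1 p k‖ = 1 := by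
  unfold UN1
  rw [norm_prod, Finset.prod_congr rfl (fun i _ => facK_one_norm i)]
  exact Finset.prod_const_one

lemma UN1_ne_zero (k : ℕ) : UN1 p k ≠ 0 := by
  intro h
  have := UN1_norm (p := p) k
  rw [h] at this
  simp at this

lemma UNa_norm_le (a : ℚ) (hden : ¬ p ∣ a.den) (k : ℕ) : ‖UNa p a k‖ ≤ 1 :=
  norm_prod_le_one _ _ fun i _ => facK_norm_le _ _ _ (norm_rat_le_one hden)

lemma dash_exact_K (a : ℚ) :
    (p:ℚ_[p]) * ((dworkDash p a : ℚ):ℚ_[p]) = (a:ℚ_[p]) + ((firstDigit p (-a) : ℕ):ℚ_[p]) := by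
  have h := dash_exact (p := p) a
  exact_mod_cast congrArg (fun t : ℚ => (t : ℚ_[p])) h

lemma dash_norm_le (a : ℚ) (hden : ¬ p ∣ a.den) : ‖((dworkDash p a : ℚ):ℚ_[p])‖ ≤ 1 := by
  have h := congrArg (fun z : ℚ_[p] => ‖z‖) (dash_exact_K (p := p) a)
  simp only [norm_mul, Padic.norm_p] at h
  have h2 : (p:ℝ)⁻¹ * ‖((dworkDash p a : ℚ):ℚ_[p])‖ ≤ (p:ℝ)⁻¹ := by
    rw [h]
    exact digit_norm hden
  have hppos : (0:ℝ) < p := by exact_mod_cast hp.out.pos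
  have h4 := mul_le_mul_of_nonneg_left h2 hppos.le
  rw [← mul_assoc, mul_inv_cancel₀ (ne_of_gt hppos), one_mul] at h4
  exact h4

lemma factK_ne_zero (k : ℕ) : ((k.factorial : ℕ) : ℚ_[p]) ≠ 0 := by
  exact_mod_cast Nat.cast_ne_zero.2 (Nat.factorial_ne_zero k)

lemma pK_ne_zero : ((p:ℕ):ℚ_[p]) ≠ 0 := by
  exact_mod_cast Nat.cast_ne_zero.2 hp.out.ne_zero

lemma gK_fact (a : ℚ) {u : ℕ} (hu : u < p) (v : ℕ) :
    gK p a (u + p*v) = gK p (dworkDash p a) v * RK p a u v := by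
  have hδ1 : ¬ (p - 1 < u) := by omega
  have hu₀ : firstDigit p (-a) < p := firstDigit_lt _
  -- numerator
  have hnum : ((risingFact a (u + p*v) : ℚ) : ℚ_[p])
      = (p:ℚ_[p])^(v + dig p a u)
        * ((risingFact (dworkDash p a) (v + dig p a u) : ℚ) : ℚ_[p])
        * UNa p a (u + p*v) := by
    rw [risingFact_cast, prod_split hu₀ (dash_exact_K a) hu v, risingFact_cast]
    rfl
  -- denominator
  have hden : (((u + p*v).factorial : ℕ) : ℚ_[p])
      = (p:ℚ_[p])^v * ((v.factorial : ℕ) : ℚ_[p]) * UN1 p (u + p*v) := by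
    have hpx1 : (p:ℚ_[p]) * 1 = 1 + (((p-1:ℕ)):ℚ_[p]) := by
      rw [mul_one, one_add_pm1]
    rw [factorial_cast_eq, prod_split pm1_lt hpx1 hu v]
    rw [if_neg hδ1, Nat.add_zero, ← factorial_cast_eq]
    rfl
  have hrf : ((risingFact (dworkDash p a) (v + dig p a u) : ℚ) : ℚ_[p])
      = ((risingFact (dworkDash p a) v : ℚ) : ℚ_[p])
        * (((dworkDash p a : ℚ):ℚ_[p]) + (v:ℚ_[p]))^(dig p a u) := by
    unfold dig
    split
    · rw [pow_one]
      have : risingFact (dworkDash p a) (v + 1)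
          = risingFact (dworkDash p a) v * (dworkDash p a + v) := by
        unfold risingFact
        rw [Finset.prod_range_succ]
      rw [this]
      push_cast
      ring
    · rw [pow_zero, Nat.add_zero, mul_one]
  unfold gK RK
  rw [hnum, hden, hrf, mul_pow]
  have hUN1 := UN1_ne_zero (p := p) (u + p*v)
  have hfv := factK_ne_zero (p := p) v
  have hpK := pK_ne_zero (p := p)
  field_simp
  ring

lemma RK_norm_le (a : ℚ) (hden : ¬ p ∣ a.den) {u : ℕ} (hu : u < p) (v : ℕ) :
    ‖RK p a u v‖ ≤ 1 := by
  unfold RK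
  rw [norm_div, norm_mul, norm_pow, UN1_norm, div_one]
  have h1 : ‖(p:ℚ_[p]) * (((dworkDash p a : ℚ):ℚ_[p]) + (v:ℚ_[p]))‖ ≤ 1 := by
    rw [norm_mul]
    have ha : ‖((dworkDash p a : ℚ):ℚ_[p]) + (v:ℚ_[p])‖ ≤ 1 :=
      le_trans (Padic.nonarchimedean _ _)
        (max_le (dash_norm_le a hden) (norm_natCast_le_one v))
    calc ‖(p:ℚ_[p])‖ * ‖((dworkDash p a : ℚ):ℚ_[p]) + (v:ℚ_[p])‖ ≤ 1 * 1 := by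
          refine mul_le_mul ?_ ha (norm_nonneg _) zero_le_one
          rw [Padic.norm_p]
          have hp1 : (1:ℝ) ≤ p := by exact_mod_cast hp.out.one_lt.le
          exact inv_le_one_of_one_le₀ hp1
      _ = 1 := mul_one _
  calc ‖(p:ℚ_[p]) * (((dworkDash p a : ℚ):ℚ_[p]) + (v:ℚ_[p]))‖ ^ (dig p a u) * ‖UNa p a (u + p*v)‖
      ≤ 1 * 1 := mul_le_mul (pow_le_one₀ (norm_nonneg _) h1) (UNa_norm_le a hden _)
        (norm_nonneg _) zero_le_one
    _ = 1 := mul_one _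

lemma pinv_mul (e : ℕ) : (p:ℝ)⁻¹ * (p:ℝ)^(-(e:ℕ):ℤ) = (p:ℝ)^(-((e+1:ℕ)):ℤ) := by
  have hp0 : (p:ℝ) ≠ 0 := by
    have := hp.out.pos
    positivity
  rw [← zpow_neg_one (p:ℝ), ← zpow_add₀ hp0]
  congr 1
  push_cast
  ring

lemma RK_sub_le (a : ℚ) (hden : ¬ p ∣ a.den) {u : ℕ} (hu : u < p) (e : ℕ) {v w : ℕ}
    (hwv : w ≤ v) (hdvd : (p^e : ℕ) ∣ (v - w)) :
    ‖RK p a u v - RK p a u w‖ ≤ (p:ℝ)^(-((e+1:ℕ)):ℤ) := by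
  obtain ⟨c, hc⟩ := hdvd
  set u₀ := firstDigit p (-a) with hu₀def
  set dK : ℚ_[p] := ((dworkDash p a : ℚ):ℚ_[p]) with hdK
  set k := u + p * w with hk
  set L := p * (v - w) with hL
  have karith : u + p * v = k + L := by
    have h1 : p * w ≤ p * v := Nat.mul_le_mul_left _ hwv
    have h2 : p * (v - w) + p * w = p * v := by
      rw [← Nat.mul_add, Nat.sub_add_cancel hwv]
    omega
  have hLc : L = c * p^(e+1) := by
    rw [hL, hc, pow_succ]
    ring
  set Ta : ℚ_[p] := ∏ i ∈ range L, facK p (a:ℚ_[p]) u₀ (k + i) with hTa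
  set T1 : ℚ_[p] := ∏ i ∈ range L, facK p 1 (p-1) (k + i) with hT1
  have hUNa_split : UNa p a (u + p*v) = UNa p a k * Ta := by
    rw [karith]
    unfold UNa
    rw [Finset.prod_range_add]
  have hUN1_split : UN1 p (u + p*v) = UN1 p k * T1 := by
    rw [karith]
    unfold UN1
    rw [Finset.prod_range_add]
  have hT1norm : ‖T1‖ = 1 := UN1_window_norm k L
  have hT1ne : T1 ≠ 0 := fun h => by
    rw [h] at hT1norm
    simp at hT1norm
  have hTaT1 : ‖Ta - T1‖ ≤ (p:ℝ)^(-((e+1:ℕ)):ℤ) := by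
    have hw := window_diff (s := e+1) (by omega) (aDigit a hden) (oneDigit (p := p)) k c
    rw [← hLc] at hw
    exact hw
  have hTa_le : ‖Ta‖ ≤ 1 :=
    norm_prod_le_one _ _ fun i _ => facK_norm_le _ _ _ (norm_rat_le_one hden)
  set Ev : ℚ_[p] := ((p:ℚ_[p]) * (dK + (v:ℚ_[p])))^(dig p a u) with hEv
  set Ew : ℚ_[p] := ((p:ℚ_[p]) * (dK + (w:ℚ_[p])))^(dig p a u) with hEw
  have hdiff : RK p a u v - RK p a u w
      = (UNa p a k / (UN1 p k * T1)) * (Ev * Ta - Ew * T1) := by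
    unfold RK
    rw [hUNa_split, hUN1_split, ← hk]
    have h1 : UN1 p k ≠ 0 := UN1_ne_zero k
    field_simp
    rw [hEv, hEw, hdK]
    ring
  have hEvTa : ‖Ev * Ta - Ew * T1‖ ≤ (p:ℝ)^(-((e+1:ℕ)):ℤ) := by
    rcases Nat.eq_zero_or_pos (dig p a u) with hd0 | hd1
    · rw [hEv, hEw, hd0, pow_zero, pow_zero, one_mul, one_mul]
      exact hTaT1
    · have hd1' : dig p a u = 1 := by
        unfold dig at hd1 ⊢
        split at hd1 <;> simp_all
      rw [hEv, hEw, hd1', pow_one, pow_one]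
      have hsplit2 : (p:ℚ_[p]) * (dK + (v:ℚ_[p])) * Ta - (p:ℚ_[p]) * (dK + (w:ℚ_[p])) * T1
          = ((p:ℚ_[p]) * (dK + (v:ℚ_[p]))) * (Ta - T1)
            + ((p:ℚ_[p]) * (((v:ℤ) - (w:ℤ) : ℤ):ℚ_[p])) * T1 := by
        push_cast
        ring
      rw [hsplit2]
      refine le_trans (Padic.nonarchimedean _ _) (max_le ?_ ?_)
      · have hE : ‖(p:ℚ_[p]) * (dK + (v:ℚ_[p]))‖ ≤ 1 := by
          rw [norm_mul]
          have hdv : ‖dK + (v:ℚ_[p])‖ ≤ 1 := le_trans (Padic.nonarchimedean _ _)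
            (max_le (dash_norm_le a hden) (norm_natCast_le_one v))
          calc ‖(p:ℚ_[p])‖ * ‖dK + (v:ℚ_[p])‖ ≤ 1 * 1 := by
                refine mul_le_mul ?_ hdv (norm_nonneg _) zero_le_one
                rw [Padic.norm_p]
                have hp1 : (1:ℝ) ≤ p := by exact_mod_cast hp.out.one_lt.le
                exact inv_le_one_of_one_le₀ hp1
            _ = 1 := mul_one _
        calc ‖(p:ℚ_[p]) * (dK + (v:ℚ_[p])) * (Ta - T1)‖
            = ‖(p:ℚ_[p]) * (dK + (v:ℚ_[p]))‖ * ‖Ta - T1‖ := norm_mul _ _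
          _ ≤ 1 * ((p:ℝ)^(-((e+1:ℕ)):ℤ)) := mul_le_mul hE hTaT1 (norm_nonneg _) zero_le_one
          _ = _ := one_mul _
      · have hzdvd : (p:ℤ)^e ∣ ((v:ℤ) - (w:ℤ)) := by
          have : ((v - w : ℕ):ℤ) = (v:ℤ) - (w:ℤ) := by
            push_cast [Nat.cast_sub hwv]
            ring
          rw [← this, hc]
          push_cast
          exact Dvd.intro _ rfl
        have hznorm : ‖(((v:ℤ) - (w:ℤ) : ℤ):ℚ_[p])‖ ≤ (p:ℝ)^(-(e:ℕ):ℤ) := norm_int_le_ppow hzdvd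
        calc ‖(p:ℚ_[p]) * (((v:ℤ) - (w:ℤ) : ℤ):ℚ_[p]) * T1‖
            = ‖(p:ℚ_[p])‖ * ‖(((v:ℤ) - (w:ℤ) : ℤ):ℚ_[p])‖ * ‖T1‖ := by
              rw [norm_mul, norm_mul]
          _ = (p:ℝ)⁻¹ * ‖(((v:ℤ) - (w:ℤ) : ℤ):ℚ_[p])‖ := by
              rw [Padic.norm_p, hT1norm, mul_one]
          _ ≤ (p:ℝ)⁻¹ * ((p:ℝ)^(-(e:ℕ):ℤ)) := by
              refine mul_le_mul_of_nonneg_left hznorm ?_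
              have := hp.out.pos
              positivity
          _ = (p:ℝ)^(-((e+1:ℕ)):ℤ) := pinv_mul e
  rw [hdiff]
  rw [norm_mul, norm_div, norm_mul, hT1norm, UN1_norm, mul_one, div_one]
  calc ‖UNa p a k‖ * ‖Ev * Ta - Ew * T1‖ ≤ 1 * ((p:ℝ)^(-((e+1:ℕ)):ℤ)) :=
        mul_le_mul (UNa_norm_le a hden k) hEvTa (norm_nonneg _) zero_le_one
    _ = _ := one_mul _

lemma RK_lipschitz (a : ℚ) (hden : ¬ p ∣ a.den) {u : ℕ} (hu : u < p) (e : ℕ) {v w : ℕ}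
    (hdvd : (p:ℤ)^e ∣ ((v:ℤ) - (w:ℤ))) :
    ‖RK p a u v - RK p a u w‖ ≤ (p:ℝ)^(-((e+1:ℕ)):ℤ) := by
  rcases le_total w v with h | h
  · refine RK_sub_le a hden hu e h ?_
    have h1 : ((v - w : ℕ):ℤ) = (v:ℤ) - (w:ℤ) := by
      push_cast [Nat.cast_sub h]
      ring
    have h2 : ((p^e : ℕ):ℤ) ∣ ((v - w : ℕ):ℤ) := by
      rw [h1]
      exact_mod_cast hdvd
    exact_mod_cast h2
  · rw [norm_sub_rev]
    refine RK_sub_le a hden hu e h ?_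
    have h1 : ((w - v : ℕ):ℤ) = (w:ℤ) - (v:ℤ) := by
      push_cast [Nat.cast_sub h]
      ring
    have h2 : ((p^e : ℕ):ℤ) ∣ ((w - v : ℕ):ℤ) := by
      rw [h1, show (w:ℤ) - v = -((v:ℤ) - w) by ring]
      exact_mod_cast hdvd.neg_right
    exact_mod_cast h2

/-! ### multi-parameter layer -/

/-- the coefficient `A(k) = ∏ (a_i)_k / k!^n` -/
noncomputable def Bco (q : ℕ) [Fact q.Prime] {n : ℕ} (a : Fin n → ℚ) (k : ℕ) : ℚ_[q] :=
  ∏ i, gK q (a i) k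

/-- the ratio `ρ(u,v) = ∏ R_{a_i}(u,v)` -/
noncomputable def rhoP (q : ℕ) [Fact q.Prime] {n : ℕ} (a : Fin n → ℚ) (u v : ℕ) : ℚ_[q] :=
  ∏ i, RK q (a i) u v

/-- validity of a parameter tuple -/
def Valid (q : ℕ) [Fact q.Prime] {n : ℕ} (a : Fin n → ℚ) : Prop :=
  ∀ i, (0 < a i) ∧ ¬ q ∣ (a i).den

lemma Valid_dash {n : ℕ} {a : Fin n → ℚ} (h : Valid p a) :
    Valid p (fun i => dworkDash p (a i)) := by
  intro i
  constructor
  · have h1 : (0:ℚ) < a i := (h i).1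
    have h2 : (0:ℚ) ≤ (firstDigit p (-(a i)) : ℚ) := by positivity
    have hppos : (0:ℚ) < p := by exact_mod_cast hp.out.pos
    unfold dworkDash
    positivity
  · exact not_dvd_den_of_norm_le_one (dash_norm_le (a i) (h i).2)

lemma Bco_fact {n : ℕ} (a : Fin n → ℚ) {u : ℕ} (hu : u < p) (v : ℕ) :
    Bco p a (u + p*v) = Bco p (fun i => dworkDash p (a i)) v * rhoP p a u v := by
  unfold Bco rhoP
  rw [← Finset.prod_mul_distrib]
  exact Finset.prod_congr rfl fun i _ => gK_fact (a i) hu v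

lemma rhoP_norm_le {n : ℕ} {a : Fin n → ℚ} (ha : Valid p a) {u : ℕ} (hu : u < p) (v : ℕ) :
    ‖rhoP p a u v‖ ≤ 1 :=
  norm_prod_le_one _ _ fun i _ => RK_norm_le (a i) (ha i).2 hu v

lemma rhoP_lipschitz {n : ℕ} {a : Fin n → ℚ} (ha : Valid p a) {u : ℕ} (hu : u < p) (e : ℕ)
    {v w : ℕ} (hdvd : (p:ℤ)^e ∣ ((v:ℤ) - (w:ℤ))) :
    ‖rhoP p a u v - rhoP p a u w‖ ≤ (p:ℝ)^(-((e+1:ℕ)):ℤ) := by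
  unfold rhoP
  exact norm_prod_sub_prod _ _ _ _ (ppow_pos _).le
    (fun i _ => RK_norm_le (a i) (ha i).2 hu v)
    (fun i _ => RK_norm_le (a i) (ha i).2 hu w)
    (fun i _ => RK_lipschitz (a i) (ha i).2 hu e hdvd)

lemma Bco_norm_le : ∀ (k : ℕ) {n : ℕ} (a : Fin n → ℚ), Valid p a → ‖Bco p a k‖ ≤ 1 := by
  intro k
  induction k using Nat.strong_induction_on with
  | _ k ih =>
    intro n a ha
    rcases Nat.eq_zero_or_pos k with h0 | hpos
    · subst h0
      unfold Bco gK risingFact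
      simp
    · have hk : k = k % p + p * (k / p) := by
        rw [Nat.mod_add_div]
      have hu : k % p < p := Nat.mod_lt _ hp.out.pos
      have hv : k / p < k := Nat.div_lt_self hpos hp.out.one_lt
      rw [hk, Bco_fact a hu (k / p), norm_mul]
      calc ‖Bco p (fun i => dworkDash p (a i)) (k / p)‖ * ‖rhoP p a (k % p) (k / p)‖
          ≤ 1 * 1 := mul_le_mul (ih _ hv _ (Valid_dash ha)) (rhoP_norm_le ha hu _)
            (norm_nonneg _) zero_le_one
        _ = 1 := mul_one _

/-- splitting a square sum into diagonal and symmetrized triangle -/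
lemma sum_sq_split (X : ℕ → ℕ → ℚ_[p]) (m : ℕ) :
    ∑ c ∈ range m, ∑ e ∈ range m, X c e
      = (∑ c ∈ range m, X c c) + ∑ c ∈ range m, ∑ e ∈ range c, (X c e + X e c) := by
  induction m with
  | zero => simp
  | succ m ih =>
    rw [Finset.sum_range_succ]
    have e1 : ∑ c ∈ range m, ∑ e ∈ range (m+1), X c e
        = (∑ c ∈ range m, ∑ e ∈ range m, X c e) + ∑ c ∈ range m, X c m := by
      rw [← Finset.sum_add_distrib]
      exact Finset.sum_congr rfl fun c _ => Finset.sum_range_succ _ _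
    rw [e1, Finset.sum_range_succ (fun e => X m e), ih]
    rw [Finset.sum_range_succ (fun c => X c c)]
    rw [Finset.sum_range_succ (fun c => ∑ e ∈ range c, (X c e + X e c))]
    rw [Finset.sum_add_distrib]
    abel

lemma diag_zero {K : ℕ → ℕ → ℚ_[p]} (hanti : ∀ v w, K w v = -K v w) (y : ℕ) : K y y = 0 := by
  have := hanti y y
  have h2 : K y y + K y y = 0 := by
    nth_rewrite 2 [this]
    ring
  exact add_self_eq_zero.1 h2

lemma val_of_anti_cont {K : ℕ → ℕ → ℚ_[p]} {g : ℕ} (hanti : ∀ v w, K w v = -K v w)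
    (hcont : ∀ (v v' w e : ℕ), (p:ℤ)^e ∣ ((v:ℤ) - v') → ‖K v w - K v' w‖ ≤ (p:ℝ)^(-((g+e:ℕ)):ℤ))
    (v w e : ℕ) (hdvd : (p:ℤ)^e ∣ ((v:ℤ) - w)) : ‖K v w‖ ≤ (p:ℝ)^(-((g+e:ℕ)):ℤ) := by
  have h1 := hcont v w w e hdvd
  rw [diag_zero hanti w, sub_zero] at h1
  exact h1

lemma ppow_mul_ppow (x y : ℕ) :
    (p:ℝ)^(-(x:ℕ):ℤ) * (p:ℝ)^(-(y:ℕ):ℤ) = (p:ℝ)^(-((x+y:ℕ)):ℤ) := by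
  have hp0 : (p:ℝ) ≠ 0 := by
    have := hp.out.pos
    positivity
  rw [← zpow_add₀ hp0]
  congr 1
  push_cast
  ring

lemma ppow_congr {X Y : ℕ} (h : X = Y) : (p:ℝ)^(-(X:ℕ):ℤ) = (p:ℝ)^(-(Y:ℕ):ℤ) := by rw [h]

lemma norm_mul3_le_one (x y z : ℚ_[p]) (hx : ‖x‖ ≤ 1) (hy : ‖y‖ ≤ 1) (hz : ‖z‖ ≤ 1) :
    ‖x * y * z‖ ≤ 1 :=
  mul_le_one_of _ _ (mul_le_one_of _ _ hx hy) hz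

lemma norm_pow_le_one (μ : ℚ_[p]) (hμ : ‖μ‖ ≤ 1) (k : ℕ) : ‖μ ^ k‖ ≤ 1 := by
  rw [norm_pow]
  exact pow_le_one₀ (norm_nonneg _) hμ

lemma Qlem : ∀ (d : ℕ), ∀ {n : ℕ} (a : Fin n → ℚ), Valid p a → ∀ (g : ℕ) (κ : ℕ → ℕ → ℚ_[p]),
    (∀ v w, κ w v = -κ v w) →
    (∀ (v v' w e : ℕ), (p:ℤ)^e ∣ ((v:ℤ) - (v':ℤ)) → ‖κ v w - κ v' w‖ ≤ (p:ℝ)^(-((g+e:ℕ)):ℤ)) →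
    ∀ (μ : ℚ_[p]), ‖μ‖ ≤ 1 → ∀ (m M : ℕ),
    ‖∑ v ∈ range (m * p^d), ∑ w ∈ range (M * p^d),
        Bco p a v * Bco p a w * μ^(v+w) * κ v w‖ ≤ (p:ℝ)^(-((g+d:ℕ)):ℤ) := by
  intro d
  induction d with
  | zero =>
    intro n a ha g κ hanti hcont μ hμ m M
    refine norm_sum_le _ _ _ (ppow_pos _).le ?_
    intro v _
    refine norm_sum_le _ _ _ (ppow_pos _).le ?_
    intro w _
    rw [norm_mul]
    calc ‖Bco p a v * Bco p a w * μ^(v+w)‖ * ‖κ v w‖ ≤ 1 * ((p:ℝ)^(-((g+0:ℕ)):ℤ)) := by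
          refine mul_le_mul ?_ ?_ (norm_nonneg _) zero_le_one
          · exact norm_mul3_le_one _ _ _ (Bco_norm_le v a ha) (Bco_norm_le w a ha)
              (norm_pow_le_one μ hμ _)
          · exact val_of_anti_cont hanti hcont v w 0 (by simpa using one_dvd _)
      _ = _ := one_mul _
  | succ d ih =>
    intro n a ha g κ hanti hcont μ hμ m M
    set a' : Fin n → ℚ := fun i => dworkDash p (a i) with ha'def
    have ha' : Valid p a' := Valid_dash ha
    set A := m * p^d with hA
    set B := M * p^d with hB
    set Kk : ℕ → ℕ → ℕ → ℕ → ℚ_[p] :=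
      fun c e x y => rhoP p a c x * rhoP p a e y * κ (c+p*x) (e+p*y) with hKk
    set Inner : ℕ → ℕ → ℚ_[p] :=
      fun c e => ∑ x ∈ range A, ∑ y ∈ range B,
        Bco p a' x * Bco p a' y * (μ^p)^(x+y) * Kk c e x y with hInner
    -- rearrangement
    have hrange1 : m * p^(d+1) = A * p := by
      rw [hA, pow_succ]
      ring
    have hrange2 : M * p^(d+1) = B * p := by
      rw [hB, pow_succ]
      ring
    have hterm : ∀ c e x y : ℕ, c < p → e < p →
        Bco p a (p*x+c) * Bco p a (p*y+e) * μ^((p*x+c)+((p*y+e))) * κ (p*x+c) (p*y+e)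
          = μ^(c+e) * (Bco p a' x * Bco p a' y * (μ^p)^(x+y) * Kk c e x y) := by
      intro c e x y hc he
      have h1 : p*x+c = c+p*x := by ring
      have h2 : p*y+e = e+p*y := by ring
      rw [h1, h2, Bco_fact a hc x, Bco_fact a he y]
      have h3 : (c+p*x)+(e+p*y) = (c+e) + p*(x+y) := by ring
      rw [h3, pow_add, pow_mul]
      rw [hKk]
      ring
    have hrearr : ∑ v ∈ range (m * p^(d+1)), ∑ w ∈ range (M * p^(d+1)),
        Bco p a v * Bco p a w * μ^(v+w) * κ v w
        = ∑ c ∈ range p, ∑ e ∈ range p, μ^(c+e) * Inner c e := by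
      rw [hrange1, hrange2]
      rw [sum_range_mul_blocks]
      have e1 : ∀ x c, (∑ w ∈ range (B * p),
          Bco p a (p*x+c) * Bco p a w * μ^((p*x+c)+w) * κ (p*x+c) w)
          = ∑ y ∈ range B, ∑ e ∈ range p,
            Bco p a (p*x+c) * Bco p a (p*y+e) * μ^((p*x+c)+(p*y+e)) * κ (p*x+c) (p*y+e) := by
        intro x c
        exact sum_range_mul_blocks _ B p
      calc ∑ x ∈ range A, ∑ c ∈ range p, ∑ w ∈ range (B * p),
            Bco p a (p*x+c) * Bco p a w * μ^((p*x+c)+w) * κ (p*x+c) w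
          = ∑ x ∈ range A, ∑ c ∈ range p, ∑ y ∈ range B, ∑ e ∈ range p,
              Bco p a (p*x+c) * Bco p a (p*y+e) * μ^((p*x+c)+(p*y+e)) * κ (p*x+c) (p*y+e) := by
            exact Finset.sum_congr rfl fun x _ => Finset.sum_congr rfl fun c _ => e1 x c
        _ = ∑ x ∈ range A, ∑ c ∈ range p, ∑ y ∈ range B, ∑ e ∈ range p,
              μ^(c+e) * (Bco p a' x * Bco p a' y * (μ^p)^(x+y) * Kk c e x y) := by
            refine Finset.sum_congr rfl fun x _ => Finset.sum_congr rfl fun c hc =>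
              Finset.sum_congr rfl fun y _ => Finset.sum_congr rfl fun e he => ?_
            exact hterm c e x y (Finset.mem_range.1 hc) (Finset.mem_range.1 he)
        _ = ∑ c ∈ range p, ∑ x ∈ range A, ∑ y ∈ range B, ∑ e ∈ range p,
              μ^(c+e) * (Bco p a' x * Bco p a' y * (μ^p)^(x+y) * Kk c e x y) :=
            Finset.sum_comm
        _ = ∑ c ∈ range p, ∑ x ∈ range A, ∑ e ∈ range p, ∑ y ∈ range B,
              μ^(c+e) * (Bco p a' x * Bco p a' y * (μ^p)^(x+y) * Kk c e x y) := by
            exact Finset.sum_congr rfl fun c _ => Finset.sum_congr rfl fun x _ =>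
              Finset.sum_comm
        _ = ∑ c ∈ range p, ∑ e ∈ range p, ∑ x ∈ range A, ∑ y ∈ range B,
              μ^(c+e) * (Bco p a' x * Bco p a' y * (μ^p)^(x+y) * Kk c e x y) := by
            exact Finset.sum_congr rfl fun c _ => Finset.sum_comm
        _ = ∑ c ∈ range p, ∑ e ∈ range p, μ^(c+e) * Inner c e := by
            refine Finset.sum_congr rfl fun c _ => Finset.sum_congr rfl fun e _ => ?_
            rw [hInner, Finset.mul_sum]
            refine Finset.sum_congr rfl fun x _ => ?_
            rw [Finset.mul_sum]
    -- kernel class facts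
    have hμp : ‖μ^p‖ ≤ 1 := norm_pow_le_one μ hμ p
    have hKcont : ∀ c e : ℕ, c < p → e < p → ∀ (x x' y f : ℕ),
        (p:ℤ)^f ∣ ((x:ℤ) - (x':ℤ)) →
        ‖Kk c e x y - Kk c e x' y‖ ≤ (p:ℝ)^(-(((g+1)+f:ℕ)):ℤ) := by
      intro c e hc he x x' y f hdvd
      have hsplit : Kk c e x y - Kk c e x' y
          = (rhoP p a c x - rhoP p a c x') * (rhoP p a e y * κ (c+p*x) (e+p*y))
            + rhoP p a c x' * rhoP p a e y * (κ (c+p*x) (e+p*y) - κ (c+p*x') (e+p*y)) := by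
        rw [hKk]
        ring
      rw [hsplit]
      refine le_trans (Padic.nonarchimedean _ _) (max_le ?_ ?_)
      · rw [norm_mul]
        calc ‖rhoP p a c x - rhoP p a c x'‖ * ‖rhoP p a e y * κ (c+p*x) (e+p*y)‖
            ≤ ((p:ℝ)^(-((f+1:ℕ)):ℤ)) * ((p:ℝ)^(-((g+0:ℕ)):ℤ)) := by
              refine mul_le_mul (rhoP_lipschitz ha hc f hdvd) ?_ (norm_nonneg _) (ppow_pos _).le
              rw [norm_mul]
              calc ‖rhoP p a e y‖ * ‖κ (c+p*x) (e+p*y)‖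
                  ≤ 1 * ((p:ℝ)^(-((g+0:ℕ)):ℤ)) := mul_le_mul (rhoP_norm_le ha he y)
                    (val_of_anti_cont hanti hcont _ _ 0 (by simpa using one_dvd _))
                    (norm_nonneg _) zero_le_one
                _ = _ := one_mul _
          _ = (p:ℝ)^(-(((f+1)+(g+0):ℕ)):ℤ) := ppow_mul_ppow _ _
          _ = (p:ℝ)^(-(((g+1)+f:ℕ)):ℤ) := ppow_congr (by omega)
      · have hd2 : (p:ℤ)^(f+1) ∣ ((c+p*x:ℕ):ℤ) - ((c+p*x':ℕ):ℤ) := by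
          have : ((c+p*x:ℕ):ℤ) - ((c+p*x':ℕ):ℤ) = (p:ℤ) * ((x:ℤ) - (x':ℤ)) := by
            push_cast
            ring
          rw [this, pow_succ, mul_comm ((p:ℤ)^f) (p:ℤ)]
          exact mul_dvd_mul_left _ hdvd
        calc ‖rhoP p a c x' * rhoP p a e y * (κ (c+p*x) (e+p*y) - κ (c+p*x') (e+p*y))‖
            ≤ 1 * ((p:ℝ)^(-((g+(f+1):ℕ)):ℤ)) := by
              rw [norm_mul]
              refine mul_le_mul ?_ (hcont _ _ _ (f+1) hd2) (norm_nonneg _) zero_le_one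
              exact mul_le_one_of _ _ (rhoP_norm_le ha hc x') (rhoP_norm_le ha he y)
          _ = (p:ℝ)^(-((g+(f+1):ℕ)):ℤ) := one_mul _
          _ = (p:ℝ)^(-(((g+1)+f:ℕ)):ℤ) := ppow_congr (by omega)
    have hKanti_diag : ∀ c : ℕ, ∀ v w, Kk c c w v = -Kk c c v w := by
      intro c v w
      rw [hKk]
      simp only
      rw [hanti]
      ring
    have hKanti_sum : ∀ c e : ℕ, ∀ v w,
        (Kk c e w v + Kk e c w v) = -(Kk c e v w + Kk e c v w) := by
      intro c e v w
      rw [hKk]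
      simp only
      rw [hanti (c+p*v) (e+p*w), hanti (e+p*v) (c+p*w)]
      ring
    -- apply inner bound
    have hInner_diag : ∀ c, c < p → ‖Inner c c‖ ≤ (p:ℝ)^(-((g+(d+1):ℕ)):ℤ) := by
      intro c hc
      have := ih a' ha' (g+1) (Kk c c) (hKanti_diag c)
        (fun v v' w e hdvd => hKcont c c hc hc v v' w e hdvd) (μ^p) hμp m M
      rw [hInner]
      refine le_trans this (le_of_eq (ppow_congr (by omega)))
    have hInner_sum : ∀ c e, c < p → e < p →
        ‖Inner c e + Inner e c‖ ≤ (p:ℝ)^(-((g+(d+1):ℕ)):ℤ) := by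
      intro c e hc he
      have hker_cont : ∀ (v v' w f : ℕ), (p:ℤ)^f ∣ ((v:ℤ) - (v':ℤ)) →
          ‖(Kk c e v w + Kk e c v w) - (Kk c e v' w + Kk e c v' w)‖
            ≤ (p:ℝ)^(-(((g+1)+f:ℕ)):ℤ) := by
        intro v v' w f hdvd
        have hsp : (Kk c e v w + Kk e c v w) - (Kk c e v' w + Kk e c v' w)
            = (Kk c e v w - Kk c e v' w) + (Kk e c v w - Kk e c v' w) := by ring
        rw [hsp]
        exact le_trans (Padic.nonarchimedean _ _)
          (max_le (hKcont c e hc he v v' w f hdvd) (hKcont e c he hc v v' w f hdvd))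
      have := ih a' ha' (g+1) (fun v w => Kk c e v w + Kk e c v w) (hKanti_sum c e)
        hker_cont (μ^p) hμp m M
      have heq : ∑ x ∈ range A, ∑ y ∈ range B,
          Bco p a' x * Bco p a' y * (μ^p)^(x+y) * (Kk c e x y + Kk e c x y)
          = Inner c e + Inner e c := by
        rw [hInner]
        simp only
        rw [← Finset.sum_add_distrib]
        refine Finset.sum_congr rfl fun x _ => ?_
        rw [← Finset.sum_add_distrib]
        refine Finset.sum_congr rfl fun y _ => ?_
        ring
      rw [heq] at this
      refine le_trans this (le_of_eq (ppow_congr (by omega)))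
    -- assemble
    rw [hrearr, sum_sq_split (fun c e => μ^(c+e) * Inner c e) p]
    refine le_trans (Padic.nonarchimedean _ _) (max_le ?_ ?_)
    · refine norm_sum_le _ _ _ (ppow_pos _).le ?_
      intro c hc
      exact mul_le_eps _ _ _ (norm_pow_le_one μ hμ _)
        (hInner_diag c (Finset.mem_range.1 hc))
    · refine norm_sum_le _ _ _ (ppow_pos _).le ?_
      intro c hc
      refine norm_sum_le _ _ _ (ppow_pos _).le ?_
      intro e he
      have hece : μ^(c+e) * Inner c e + μ^(e+c) * Inner e c
          = μ^(c+e) * (Inner c e + Inner e c) := by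
        rw [show e+c = c+e from by ring]
        ring
      rw [hece]
      exact mul_le_eps _ _ _ (norm_pow_le_one μ hμ _)
        (hInner_sum c e (Finset.mem_range.1 hc)
          (lt_trans (Finset.mem_range.1 he) (Finset.mem_range.1 hc)))

lemma Bco_eq {n : ℕ} (a : Fin n → ℚ) (k : ℕ) :
    Bco p a k = (((∏ i, risingFact (a i) k) / ((k.factorial:ℚ))^n : ℚ) : ℚ_[p]) := by
  unfold Bco gK
  rw [Finset.prod_div_distrib, Finset.prod_const, Finset.card_univ, Fintype.card_fin]
  push_cast
  rfl

lemma truncHG_cast {n : ℕ} (a : Fin n → ℚ) (lam : ℚ) (N : ℕ) :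
    ((truncHG a lam N : ℚ) : ℚ_[p]) = ∑ k ∈ range (N+1), Bco p a k * ((lam:ℚ_[p]))^k := by
  unfold truncHG
  push_cast
  refine Finset.sum_congr rfl fun k _ => ?_
  rw [Bco_eq]
  push_cast
  ring

lemma final_convert {X : ℚ} {s : ℕ} (h : ‖(X:ℚ_[p])‖ ≤ (p:ℝ)^(-(s:ℕ):ℤ)) :
    padicNorm p X ≤ (p:ℚ)^(-(s:ℤ)) := by
  have h1 : ‖(X:ℚ_[p])‖ = ((padicNorm p X : ℚ):ℝ) := by
    rw [Padic.eq_padicNorm]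
  have h2 : ((p:ℝ))^(-(s:ℕ):ℤ) = (((p:ℚ)^(-(s:ℤ)) : ℚ) : ℝ) := by
    push_cast
    ring
  rw [h1, h2] at h
  exact_mod_cast h

end DworkProof

open DworkProof in
theorem dwork_congruence (n : ℕ) (hn : 1 ≤ n) (a : Fin n → ℚ)
    (ha : ∀ i, 0 < a i ∧ a i < 1) (lam : ℚ) (p : ℕ) [hp : Fact p.Prime]
    (hM : ¬ p ∣ Nat.lcm (Finset.univ.lcm fun i => (a i).den) lam.den)
    (m s t : ℕ) (hm : 1 ≤ m) (hs : 1 ≤ s) (hst : s ≤ t) :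
    padicNorm p
      (truncHG a lam (m * p ^ s - 1) *
          truncHG (fun i => dworkDash p (a i)) (lam ^ p) (m * p ^ (t - 1) - 1) -
        truncHG (fun i => dworkDash p (a i)) (lam ^ p) (m * p ^ (s - 1) - 1) *
          truncHG a lam (m * p ^ t - 1)) ≤ (p : ℚ) ^ (-(s : ℤ)) := by
  classical
  -- denominators
  have hdens : ∀ i, ¬ p ∣ (a i).den := by
    intro i hdvd
    have h1 : (a i).den ∣ Finset.univ.lcm (fun i => (a i).den) :=
      Finset.dvd_lcm (Finset.mem_univ i)
    have h2 : Finset.univ.lcm (fun i => (a i).den)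
        ∣ Nat.lcm (Finset.univ.lcm fun i => (a i).den) lam.den := Nat.dvd_lcm_left _ _
    exact hM (hdvd.trans (h1.trans h2))
  have hlamden : ¬ p ∣ lam.den := fun hdvd => hM (dvd_trans hdvd (Nat.dvd_lcm_right _ _))
  have hValid : Valid p a := fun i => ⟨(ha i).1, hdens i⟩
  have hValid' : Valid p (fun i => dworkDash p (a i)) := Valid_dash hValid
  set lamK : ℚ_[p] := ((lam:ℚ):ℚ_[p]) with hlamK
  set μK : ℚ_[p] := lamK ^ p with hμK
  have hlam1 : ‖lamK‖ ≤ 1 := norm_rat_le_one hlamden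
  have hμ1 : ‖μK‖ ≤ 1 := norm_pow_le_one _ hlam1 p
  set a' : Fin n → ℚ := fun i => dworkDash p (a i) with ha'
  set F : ℕ → ℚ_[p] := fun r => ∑ k ∈ range (m * p^r), Bco p a k * lamK^k with hF
  set G : ℕ → ℚ_[p] := fun r => ∑ w ∈ range (m * p^r), Bco p a' w * μK^w with hG
  -- range rewriting
  have hpow_pos : ∀ r : ℕ, 1 ≤ m * p^r := by
    intro r
    have := pow_pos hp.out.pos r
    exact Nat.one_le_iff_ne_zero.2 (by positivity)
  have hcastF : ∀ r : ℕ, ((truncHG a lam (m * p^r - 1) : ℚ) : ℚ_[p]) = F r := by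
    intro r
    rw [truncHG_cast, Nat.sub_add_cancel (hpow_pos r)]
  have hcastG : ∀ r : ℕ, ((truncHG a' (lam^p) (m * p^r - 1) : ℚ) : ℚ_[p]) = G r := by
    intro r
    rw [truncHG_cast, Nat.sub_add_cancel (hpow_pos r)]
    refine Finset.sum_congr rfl fun w _ => ?_
    rw [hμK, hlamK]
    push_cast
    ring
  -- main norm bound
  refine final_convert ?_
  push_cast
  rw [hcastF s, hcastF t, hcastG (t-1), hcastG (s-1)]
  -- digit decomposition of F
  set Vs := m * p^(s-1) with hVs
  set Vt := m * p^(t-1) with hVt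
  have hFdecomp : ∀ r : ℕ, 1 ≤ r →
      F r = ∑ u ∈ range p, lamK^u
        * ∑ v ∈ range (m * p^(r-1)), Bco p a' v * rhoP p a u v * μK^v := by
    intro r hr
    have hrange : m * p^r = (m * p^(r-1)) * p := by
      rw [mul_assoc, ← pow_succ]
      congr 2
      omega
    rw [hF]
    simp only
    rw [hrange, sum_range_mul_blocks]
    have e1 : ∀ v u, v ∈ range (m * p^(r-1)) → u ∈ range p →
        Bco p a (p*v+u) * lamK^(p*v+u)
          = lamK^u * (Bco p a' v * rhoP p a u v * μK^v) := by
      intro v u _ hu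
      rw [show p*v+u = u+p*v from by ring, Bco_fact a (Finset.mem_range.1 hu) v]
      rw [pow_add, pow_mul, hμK]
      ring
    rw [Finset.sum_congr rfl (fun v hv => Finset.sum_congr rfl (fun u hu => e1 v u hv hu))]
    rw [Finset.sum_comm]
    refine Finset.sum_congr rfl fun u _ => ?_
    rw [Finset.mul_sum]
  -- the double sum form
  have hkey : F s * G (t-1) - G (s-1) * F t
      = ∑ u ∈ range p, lamK^u *
          (∑ v ∈ range Vs, ∑ w ∈ range Vt,
            Bco p a' v * Bco p a' w * μK^(v+w) * (rhoP p a u v - rhoP p a u w)) := by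
    rw [hFdecomp s hs, hFdecomp t (le_trans hs hst)]
    rw [Finset.sum_mul, Finset.mul_sum, ← Finset.sum_sub_distrib]
    refine Finset.sum_congr rfl fun u _ => ?_
    have e2 : (lamK^u * ∑ v ∈ range (m * p^(s-1)), Bco p a' v * rhoP p a u v * μK^v) * G (t-1)
        - G (s-1) * (lamK^u * ∑ v ∈ range (m * p^(t-1)), Bco p a' v * rhoP p a u v * μK^v)
        = lamK^u * ((∑ v ∈ range Vs, Bco p a' v * rhoP p a u v * μK^v) * G (t-1)
            - G (s-1) * ∑ v ∈ range Vt, Bco p a' v * rhoP p a u v * μK^v) := by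
      rw [hVs, hVt]
      ring
    rw [e2]
    congr 1
    rw [hG]
    simp only
    rw [Finset.sum_mul_sum, Finset.sum_mul_sum]
    rw [← Finset.sum_sub_distrib]
    refine Finset.sum_congr rfl fun v _ => ?_
    rw [← Finset.sum_sub_distrib]
    refine Finset.sum_congr rfl fun w _ => ?_
    rw [pow_add]
    ring
  rw [hkey]
  -- bound each u-term via Qlem
  refine norm_sum_le _ _ _ (ppow_pos _).le ?_
  intro u hu
  have hup : u < p := Finset.mem_range.1 hu
  have hVtM : Vt = (m * p^(t-s)) * p^(s-1) := by
    rw [hVt, mul_assoc, ← pow_add]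
    congr 2
    omega
  have hκanti : ∀ v w, (rhoP p a u w - rhoP p a u v) = -(rhoP p a u v - rhoP p a u w) := by
    intro v w
    ring
  have hκcont : ∀ (v v' w e : ℕ), (p:ℤ)^e ∣ ((v:ℤ) - (v':ℤ)) →
      ‖(rhoP p a u v - rhoP p a u w) - (rhoP p a u v' - rhoP p a u w)‖
        ≤ (p:ℝ)^(-((1+e:ℕ)):ℤ) := by
    intro v v' w e hdvd
    have e3 : (rhoP p a u v - rhoP p a u w) - (rhoP p a u v' - rhoP p a u w)
        = rhoP p a u v - rhoP p a u v' := by ring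
    rw [e3]
    refine le_trans (rhoP_lipschitz hValid hup e hdvd) (le_of_eq (ppow_congr (by omega)))
  have hq := Qlem (s-1) a' hValid' 1 (fun v w => rhoP p a u v - rhoP p a u w)
    hκanti hκcont μK hμ1 m (m * p^(t-s))
  rw [← hVs, ← hVtM] at hq
  refine le_trans (mul_le_eps _ _ _ (norm_pow_le_one _ hlam1 u) hq) ?_
  exact le_of_eq (ppow_congr (by omega))
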